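/- arXiv:1205.1482 — 4 statements merged into one kernel-verified Lean document; each statement's English description precedes it below -/
import Mathlib

section
/- A scalar-valued spectral function J(X) = φ(Λ_X), where Λ_X ∈ ℝ^n is the vector of singular values of X ∈ ℝ^{n₁×n₂} (n = min(n₁,n₂)) and φ : ℝ^n → ℝ ∪ {∞} is a proper lower semi-continuous symmetric function (φ(PΛ) = φ(Λ) for every permutation matrix P) extended by φ(Λ) = φ(|Λ|), is convex if and only if φ is convex. -/
open Matrix

/-- The rectangular `n₁ × n₂` matrix with the vector `Λ ∈ ℝ^{min n₁ n₂}` on its main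
diagonal and `0` elsewhere. -/
noncomputable def rectDiag {n₁ n₂ : ℕ} (Λ : Fin (min n₁ n₂) → ℝ) :
    Matrix (Fin n₁) (Fin n₂) ℝ :=
  Matrix.of fun i j =>
    if h : (i : ℕ) = (j : ℕ) ∧ (i : ℕ) < min n₁ n₂ then Λ ⟨(i : ℕ), h.2⟩ else 0

/-- `(V, Λ, U)` is a (full) singular value decomposition of `X ∈ ℝ^{n₁ × n₂}`:
`V`, `U` are orthogonal, `Λ` is the vector of nonnegative singular values, and
`X = V diag(Λ) Uᵀ`. -/
noncomputable def IsSVD {n₁ n₂ : ℕ} (X : Matrix (Fin n₁) (Fin n₂) ℝ)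
    (V : Matrix (Fin n₁) (Fin n₁) ℝ) (Λ : Fin (min n₁ n₂) → ℝ)
    (U : Matrix (Fin n₂) (Fin n₂) ℝ) : Prop :=
  Vᵀ * V = 1 ∧ V * Vᵀ = 1 ∧ Uᵀ * U = 1 ∧ U * Uᵀ = 1 ∧ (∀ i, 0 ≤ Λ i) ∧
    X = V * rectDiag Λ * Uᵀ

/-- Convexity for an extended-real-valued function on a real vector space. -/
def ERealConvex {E : Type*} [AddCommGroup E] [Module ℝ E] (f : E → EReal) : Prop :=
  ∀ x y : E, ∀ a b : ℝ, 0 ≤ a → 0 ≤ b → a + b = 1 →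
    f (a • x + b • y) ≤ (a : EReal) * f x + (b : EReal) * f y

lemma ereal_comb {a b : ℝ} (ha : 0 ≤ a) (hb : 0 ≤ b) (hab : a + b = 1) (z : EReal) :
    (a : EReal) * z + (b : EReal) * z = z := by
  rw [← EReal.right_distrib_of_nonneg (by exact_mod_cast ha) (by exact_mod_cast hb),
    ← EReal.coe_add, hab]
  simp

lemma jensen_finset {m : ℕ} {φ : (Fin m → ℝ) → EReal} (hconv : ERealConvex φ)
    {ι : Type*} (t : Finset ι) (w : ι → ℝ) (z : ι → Fin m → ℝ) (C : EReal)
    (hw0 : ∀ i ∈ t, 0 ≤ w i) (hw1 : ∑ i ∈ t, w i = 1)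
    (hz : ∀ i ∈ t, φ (z i) ≤ C) :
    φ (∑ i ∈ t, w i • z i) ≤ C := by
  classical
  induction t using Finset.induction generalizing w with
  | empty => simp at hw1
  | insert a t ha ih =>
    rw [Finset.sum_insert ha] at hw1 ⊢
    have hwa : 0 ≤ w a := hw0 a (Finset.mem_insert_self a t)
    have hw0' : ∀ i ∈ t, 0 ≤ w i := fun i hi => hw0 i (Finset.mem_insert_of_mem hi)
    set s : ℝ := ∑ i ∈ t, w i with hs
    have hs0 : 0 ≤ s := Finset.sum_nonneg hw0'
    rcases eq_or_lt_of_le hs0 with hs00 | hspos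
    · -- s = 0, all weights in t are 0, w a = 1
      have hzero : ∀ i ∈ t, w i = 0 :=
        (Finset.sum_eq_zero_iff_of_nonneg hw0').mp hs00.symm
      have hwa1 : w a = 1 := by have h0 : s = 0 := hs00.symm; linarith
      have : ∑ i ∈ t, w i • z i = 0 := Finset.sum_eq_zero fun i hi => by
        rw [hzero i hi, zero_smul]
      rw [this, add_zero, hwa1, one_smul]
      exact hz a (Finset.mem_insert_self a t)
    · -- s > 0
      have ih' : φ (∑ i ∈ t, (w i / s) • z i) ≤ C := by
        refine ih (fun i => w i / s) (fun i hi => div_nonneg (hw0' i hi) hs0) ?_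
          (fun i hi => hz i (Finset.mem_insert_of_mem hi))
        rw [← Finset.sum_div, ← hs, div_self (ne_of_gt hspos)]
      have hsum : ∑ i ∈ t, w i • z i = s • ∑ i ∈ t, (w i / s) • z i := by
        rw [Finset.smul_sum]
        refine Finset.sum_congr rfl fun i hi => ?_
        rw [smul_smul, mul_div_cancel₀ _ (ne_of_gt hspos)]
      rw [hsum]
      calc φ (w a • z a + s • ∑ i ∈ t, (w i / s) • z i)
          ≤ (w a : EReal) * φ (z a) + (s : EReal) * φ (∑ i ∈ t, (w i / s) • z i) :=
            hconv _ _ _ _ hwa hs0 hw1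
        _ ≤ (w a : EReal) * C + (s : EReal) * C := by
            exact add_le_add
              (mul_le_mul_of_nonneg_left (hz a (Finset.mem_insert_self a t))
                (EReal.coe_nonneg.mpr hwa))
              (mul_le_mul_of_nonneg_left ih' (EReal.coe_nonneg.mpr hs0))
        _ = C := ereal_comb hwa hs0 hw1 C

lemma phi_mono_abs {m : ℕ} {φ : (Fin m → ℝ) → EReal} (hconv : ERealConvex φ)
    (habs : ∀ Λ : Fin m → ℝ, φ (fun i => |Λ i|) = φ Λ)
    {x y : Fin m → ℝ} (hxy : ∀ i, |x i| ≤ y i) : φ x ≤ φ y := by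
  classical
  suffices H : ∀ (s : Finset (Fin m)) (x : Fin m → ℝ), (∀ i, |x i| ≤ y i) →
      (∀ i ∉ s, x i = y i) → φ x ≤ φ y by
    exact H Finset.univ x hxy (fun i hi => absurd (Finset.mem_univ i) hi)
  intro s
  induction s using Finset.induction with
  | empty =>
    intro x hx hout
    have : x = y := funext fun i => hout i (Finset.notMem_empty i)
    rw [this]
  | insert a s ha ih =>
    intro x hx hout
    have hya : 0 ≤ y a := le_trans (abs_nonneg _) (hx a)
    set xp := Function.update x a (y a) with hxp_def
    set xm := Function.update x a (-(y a)) with hxm_def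
    have hxp_le : φ xp ≤ φ y := by
      refine ih xp (fun i => ?_) (fun i hi => ?_)
      · rcases eq_or_ne i a with rfl | hne
        · simp [xp, abs_of_nonneg hya]
        · simp [xp, Function.update_of_ne hne]; exact hx i
      · rcases eq_or_ne i a with rfl | hne
        · simp [xp]
        · rw [hxp_def, Function.update_of_ne hne]
          exact hout i (fun h => hi (Finset.mem_of_mem_insert_of_ne h hne))
    have habs_eq : φ xm = φ xp := by
      rw [← habs xm, ← habs xp]
      congr 1
      funext i
      rcases eq_or_ne i a with rfl | hne
      · simp [xm, xp]
      · simp [xm, xp, Function.update_of_ne hne]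
    rcases eq_or_lt_of_le hya with h0 | hpos
    · -- y a = 0, hence x a = 0 and x = xp
      have hxa : x a = 0 := by
        have := hx a; rw [← h0] at this; exact abs_eq_zero.mp (le_antisymm this (abs_nonneg _))
      have : x = xp := by
        funext i
        rcases eq_or_ne i a with rfl | hne
        · simp [xp, hxa, ← h0]
        · simp [xp, Function.update_of_ne hne]
      rw [this]; exact hxp_le
    · set t : ℝ := (x a + y a) / (2 * y a) with ht_def
      have ht0 : 0 ≤ t := by
        apply div_nonneg _ (by linarith)
        have := neg_abs_le (x a); have := hx a; linarith [neg_le_of_abs_le (hx a)]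
      have ht1 : t ≤ 1 := by
        rw [div_le_one (by linarith)]
        have := le_of_abs_le (hx a); linarith
      have hcomb : x = t • xp + (1 - t) • xm := by
        funext i
        rcases eq_or_ne i a with rfl | hne
        · simp only [Pi.add_apply, Pi.smul_apply, smul_eq_mul, xp, xm,
            Function.update_self]
          rw [ht_def]
          field_simp
          ring
        · simp [xp, xm, Function.update_of_ne hne]; ring
      calc φ x = φ (t • xp + (1 - t) • xm) := by rw [hcomb]
        _ ≤ (t : EReal) * φ xp + ((1 - t : ℝ) : EReal) * φ xm :=
            hconv _ _ _ _ ht0 (by linarith) (by ring)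
        _ = (t : EReal) * φ xp + ((1 - t : ℝ) : EReal) * φ xp := by rw [habs_eq]
        _ = φ xp := ereal_comb ht0 (by linarith) (by ring) _
        _ ≤ φ y := hxp_le

lemma exists_perm_dominating {m : ℕ} (P : Equiv.Perm (Fin m ⊕ Fin m)) :
    ∃ π : Equiv.Perm (Fin m), ∀ (i : Fin m) (Λ : Fin m → ℝ), (∀ j, 0 ≤ Λ j) →
      Sum.elim Λ 0 (P (Sum.inl i)) ≤ Λ (π i) := by
  classical
  let p : Fin m → Prop := fun i => (P (Sum.inl i)).isLeft
  let q : Fin m → Prop := fun j => (P.symm (Sum.inl j)).isLeft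
  let e : {i // p i} ≃ {j // q j} :=
    { toFun := fun x => ⟨(P (Sum.inl x.1)).getLeft x.2, by
        show ((P.symm (Sum.inl _)).isLeft) = true
        rw [Sum.inl_getLeft]
        simp⟩
      invFun := fun y => ⟨(P.symm (Sum.inl y.1)).getLeft y.2, by
        show ((P (Sum.inl _)).isLeft) = true
        rw [Sum.inl_getLeft]
        simp⟩
      left_inv := by
        rintro ⟨i, hi⟩
        apply Subtype.ext
        simp [Sum.inl_getLeft]
      right_inv := by
        rintro ⟨j, hj⟩
        apply Subtype.ext
        simp [Sum.inl_getLeft] }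
  refine ⟨e.extendSubtype, fun i Λ hΛ => ?_⟩
  by_cases hi : p i
  · rw [Equiv.extendSubtype_apply_of_mem e i hi]
    have h1 : (e ⟨i, hi⟩ : Fin m) = (P (Sum.inl i)).getLeft hi := rfl
    rw [h1]
    conv_lhs => rw [← Sum.inl_getLeft (P (Sum.inl i)) hi]
    exact le_refl _
  · rcases hs : P (Sum.inl i) with j | j
    · exfalso; apply hi; show (P (Sum.inl i)).isLeft = true; rw [hs]; rfl
    · simpa using hΛ _

lemma sum_castLE {m n : ℕ} (h : m ≤ n) (f : Fin n → ℝ)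
    (hf : ∀ k : Fin n, ¬((k : ℕ) < m) → f k = 0) :
    ∑ k, f k = ∑ k : Fin m, f (Fin.castLE h k) := by
  classical
  have hco : ∀ k : Fin m, Fin.castLE h k = (Fin.castLEEmb h) k := fun k => rfl
  simp only [hco]
  rw [← Finset.sum_map Finset.univ (Fin.castLEEmb h) f]
  symm
  apply Finset.sum_subset (Finset.subset_univ _)
  intro x _ hx
  apply hf
  intro hlt
  exact hx (by
    simp only [Finset.mem_map, Finset.mem_univ, true_and]
    exact ⟨⟨(x : ℕ), hlt⟩, by ext; simp⟩)

lemma sum_sq_castLE {m n : ℕ} (h : m ≤ n) (f : Fin n → ℝ) :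
    ∑ k : Fin m, f (Fin.castLE h k) ^ 2 ≤ ∑ k, f k ^ 2 := by
  classical
  have hco : ∀ k : Fin m, Fin.castLE h k = (Fin.castLEEmb h) k := fun k => rfl
  simp only [hco]
  rw [← Finset.sum_map Finset.univ (Fin.castLEEmb h) (fun k => f k ^ 2)]
  exact Finset.sum_le_sum_of_subset_of_nonneg (Finset.subset_univ _)
    (fun i _ _ => sq_nonneg _)

lemma real_conjTranspose {a b : Type*} (M : Matrix a b ℝ) : Mᴴ = Mᵀ := by
  ext i j; simp [Matrix.conjTranspose_apply]

theorem exists_svd {n₁ n₂ : ℕ} (X : Matrix (Fin n₁) (Fin n₂) ℝ) :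
    ∃ V Λ U, IsSVD X V Λ U := by
  classical
  set A := Xᴴ * X with hAdef
  have hA : A.IsHermitian := Matrix.isHermitian_conjTranspose_mul_self X
  set μ : Fin n₂ → ℝ := hA.eigenvalues with hμdef
  have hμ0 : ∀ i, 0 ≤ μ i := Matrix.eigenvalues_conjTranspose_mul_self_nonneg X
  set U0 : Matrix (Fin n₂) (Fin n₂) ℝ := ((hA.eigenvectorUnitary : unitaryGroup (Fin n₂) ℝ) : Matrix (Fin n₂) (Fin n₂) ℝ) with hU0
  have hU0mem := hA.eigenvectorUnitary.2
  have hU0l : U0ᵀ * U0 = 1 := by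
    have h := (Unitary.mem_iff.mp hU0mem).1
    rwa [Matrix.star_eq_conjTranspose, real_conjTranspose] at h
  have hU0r : U0 * U0ᵀ = 1 := by
    have h := (Unitary.mem_iff.mp hU0mem).2
    rwa [Matrix.star_eq_conjTranspose, real_conjTranspose] at h
  have hdiag : U0ᵀ * A * U0 = Matrix.diagonal μ := by
    have h := hA.conjStarAlgAut_star_eigenvectorUnitary
    rw [Unitary.conjStarAlgAut_star_apply, Matrix.star_eq_conjTranspose, real_conjTranspose] at h
    rw [h, RCLike.ofReal_real_eq_id]
    rfl
  -- number of nonzero eigenvalues is at most min n₁ n₂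
  have hcard : Fintype.card {i // μ i ≠ 0} ≤ min n₁ n₂ := by
    rw [← hA.rank_eq_card_non_zero_eigs]
    have h1 : A.rank = X.rank := Matrix.rank_conjTranspose_mul_self X
    rw [h1]
    exact le_min (Matrix.rank_le_height X) (Matrix.rank_le_width X)
  -- sort the eigenvalues in decreasing order
  set ρ : Equiv.Perm (Fin n₂) := Tuple.sort (fun i => -μ i) with hρ
  set ν : Fin n₂ → ℝ := fun j => μ (ρ j) with hνdef
  have hν0 : ∀ j, 0 ≤ ν j := fun j => hμ0 _
  have hanti : ∀ i j : Fin n₂, i ≤ j → ν j ≤ ν i := by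
    intro i j hij
    have h := Tuple.monotone_sort (fun i => -μ i) hij
    simp only [Function.comp_apply] at h
    simp only [hνdef]
    linarith
  have hsupp : ∀ j : Fin n₂, ν j ≠ 0 → (j : ℕ) < min n₁ n₂ := by
    intro j hj
    by_contra hge
    push_neg at hge
    have hcard2 : Fintype.card {i // ν i ≠ 0} = Fintype.card {i // μ i ≠ 0} :=
      Fintype.card_congr (ρ.subtypeEquiv fun i => Iff.rfl)
    have hpos : 0 < ν j := lt_of_le_of_ne (hν0 j) (Ne.symm hj)
    have hkn₂ : ∀ k : Fin (min n₁ n₂ + 1), (k : ℕ) < n₂ := fun k =>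
      lt_of_le_of_lt (le_trans (Nat.le_of_lt_succ k.isLt) hge) j.isLt
    have hνk : ∀ k : Fin (min n₁ n₂ + 1), ν ⟨(k : ℕ), hkn₂ k⟩ ≠ 0 := by
      intro k
      have hle : (⟨(k : ℕ), hkn₂ k⟩ : Fin n₂) ≤ j := by
        rw [Fin.le_def]
        exact le_trans (Nat.le_of_lt_succ k.isLt) hge
      exact ne_of_gt (lt_of_lt_of_le hpos (hanti _ j hle))
    have hinj : Function.Injective (fun k : Fin (min n₁ n₂ + 1) =>
        (⟨⟨(k : ℕ), hkn₂ k⟩, hνk k⟩ : {i // ν i ≠ 0})) := by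
      intro k k' hkk'
      have := congrArg (fun x : {i // ν i ≠ 0} => ((x : Fin n₂) : ℕ)) hkk'
      simpa [Fin.ext_iff] using this
    have := Fintype.card_le_of_injective _ hinj
    rw [hcard2] at this
    simp only [Fintype.card_fin] at this
    omega
  set U : Matrix (Fin n₂) (Fin n₂) ℝ := U0.submatrix id ρ with hUdef
  have hUl : Uᵀ * U = 1 := by
    ext j k
    have h1 : (Uᵀ * U) j k = (U0ᵀ * U0) (ρ j) (ρ k) := by
      simp [Matrix.mul_apply, hUdef, Matrix.submatrix_apply, Matrix.transpose_apply]
    rw [h1, hU0l]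
    simp [Matrix.one_apply, EmbeddingLike.apply_eq_iff_eq]
  have hUr : U * Uᵀ = 1 := mul_eq_one_comm.mp hUl
  set Y := X * U with hYdef
  have hYe : Y = (X * U0).submatrix id ρ := by
    ext i j
    simp [hYdef, hUdef, Matrix.mul_apply, Matrix.submatrix_apply]
  have h2 : (X * U0)ᵀ * (X * U0) = Matrix.diagonal μ := by
    have : (X * U0)ᵀ * (X * U0) = U0ᵀ * A * U0 := by
      rw [Matrix.transpose_mul, hAdef, real_conjTranspose, Matrix.mul_assoc,
        ← Matrix.mul_assoc Xᵀ X U0, ← Matrix.mul_assoc U0ᵀ (Xᵀ * X) U0]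
    rw [this, hdiag]
  have hYY : ∀ a b : Fin n₂, ∑ r, Y r a * Y r b = Matrix.diagonal ν a b := by
    intro a b
    have h3 : (Yᵀ * Y) a b = ((X * U0)ᵀ * (X * U0)) (ρ a) (ρ b) := by
      simp [hYe, Matrix.mul_apply, Matrix.submatrix_apply, Matrix.transpose_apply]
    have h4 : (Yᵀ * Y) a b = ∑ r, Y r a * Y r b := by
      simp [Matrix.mul_apply, Matrix.transpose_apply]
    rw [← h4, h3, h2]
    by_cases hab : a = b
    · subst hab; simp [Matrix.diagonal_apply_eq, hνdef]
    · rw [Matrix.diagonal_apply_ne _ (fun h => hab (ρ.injective h)),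
        Matrix.diagonal_apply_ne _ hab]
  have hYzero : ∀ j : Fin n₂, ν j = 0 → ∀ r, Y r j = 0 := by
    intro j hj r
    have h5 : ∑ r, Y r j * Y r j = 0 := by rw [hYY j j]; simp [Matrix.diagonal_apply_eq, hj]
    have h6 : ∀ r ∈ Finset.univ, (0:ℝ) ≤ Y r j * Y r j := fun r _ => mul_self_nonneg _
    have := (Finset.sum_eq_zero_iff_of_nonneg h6).mp h5 r (Finset.mem_univ r)
    exact mul_self_eq_zero.mp this
  set Λ : Fin (min n₁ n₂) → ℝ :=
    fun i => Real.sqrt (ν (Fin.castLE (min_le_right n₁ n₂) i)) with hΛdef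
  have hΛ0 : ∀ i, 0 ≤ Λ i := fun i => Real.sqrt_nonneg _
  -- the orthonormal family of (normalized) nonzero columns of Y
  set v : Fin n₁ → EuclideanSpace ℝ (Fin n₁) :=
    fun i => if h : (i : ℕ) < n₂
      then WithLp.toLp 2 (fun r => Y r ⟨(i : ℕ), h⟩ / Real.sqrt (ν ⟨(i : ℕ), h⟩))
      else 0 with hvdef
  set s : Set (Fin n₁) := {i | ∃ h : (i : ℕ) < n₂, ν ⟨(i : ℕ), h⟩ ≠ 0} with hsdef
  have horth : Orthonormal ℝ (s.restrict v) := by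
    rw [orthonormal_iff_ite]
    rintro ⟨i, hi2, hiν⟩ ⟨j, hj2, hjν⟩
    have hinner : (inner ℝ (s.restrict v ⟨i, hi2, hiν⟩) (s.restrict v ⟨j, hj2, hjν⟩) : ℝ)
        = ∑ r, v i r * v j r := by
      simp only [Set.restrict_apply, PiLp.inner_apply, RCLike.inner_apply, conj_trivial]
      exact Finset.sum_congr rfl fun r _ => mul_comm _ _
    rw [hinner]
    have hv_i : ∀ r, v i r = Y r ⟨(i : ℕ), hi2⟩ / Real.sqrt (ν ⟨(i : ℕ), hi2⟩) := by
      intro r; simp only [hvdef, dif_pos hi2]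
    have hv_j : ∀ r, v j r = Y r ⟨(j : ℕ), hj2⟩ / Real.sqrt (ν ⟨(j : ℕ), hj2⟩) := by
      intro r; simp only [hvdef, dif_pos hj2]
    simp only [hv_i, hv_j, div_mul_div_comm]
    rw [← Finset.sum_div, hYY]
    by_cases hij : i = j
    · subst hij
      rw [if_pos rfl, Matrix.diagonal_apply_eq]
      rw [Real.mul_self_sqrt (hν0 _)]
      exact div_self hiν
    · have hne : (⟨(i : ℕ), hi2⟩ : Fin n₂) ≠ ⟨(j : ℕ), hj2⟩ := by
        simp [Fin.ext_iff]; exact fun h => hij (Fin.ext h)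
      rw [Matrix.diagonal_apply_ne _ hne, zero_div,
        if_neg (by simp [Subtype.ext_iff, Fin.ext_iff]; exact fun h => hij (Fin.ext h))]
  have hcards : Module.finrank ℝ (EuclideanSpace ℝ (Fin n₁)) = Fintype.card (Fin n₁) :=
    finrank_euclideanSpace
  obtain ⟨b, hb⟩ := horth.exists_orthonormalBasis_extension_of_card_eq hcards
  set V : Matrix (Fin n₁) (Fin n₁) ℝ := Matrix.of (fun r i => b i r) with hVdef
  have hVl : Vᵀ * V = 1 := by
    ext i j
    have horthb := orthonormal_iff_ite.mp b.orthonormal i j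
    have hinner : (inner ℝ (b i) (b j) : ℝ) = ∑ r, b i r * b j r := by
      simp [PiLp.inner_apply, RCLike.inner_apply, mul_comm]
    rw [hinner] at horthb
    have : (Vᵀ * V) i j = ∑ r, b i r * b j r := by
      simp [Matrix.mul_apply, hVdef, Matrix.transpose_apply]
    rw [this, horthb]
    simp [Matrix.one_apply]
  have hVr : V * Vᵀ = 1 := mul_eq_one_comm.mp hVl
  have hYV : Y = V * rectDiag Λ := by
    ext r j
    rw [Matrix.mul_apply]
    by_cases hj : (j : ℕ) < min n₁ n₂
    · have hj1 : (j : ℕ) < n₁ := lt_of_lt_of_le hj (min_le_left _ _)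
      have hj2 : (j : ℕ) < n₂ := j.isLt
      rw [Finset.sum_eq_single (⟨(j : ℕ), hj1⟩ : Fin n₁)]
      · have hcond : ((⟨(j : ℕ), hj1⟩ : Fin n₁) : ℕ) = (j : ℕ) ∧ ((⟨(j : ℕ), hj1⟩ : Fin n₁) : ℕ) < min n₁ n₂ := ⟨rfl, hj⟩
        have hrd : rectDiag Λ ⟨(j : ℕ), hj1⟩ j = Λ ⟨(j : ℕ), hj⟩ := by
          simp only [rectDiag, Matrix.of_apply]
          exact dif_pos ⟨trivial, hj⟩
        rw [hrd]
        have hcast : Fin.castLE (min_le_right n₁ n₂) (⟨(j : ℕ), hj⟩ : Fin (min n₁ n₂)) = ⟨(j : ℕ), hj2⟩ := rfl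
        by_cases hν : ν ⟨(j : ℕ), hj2⟩ = 0
        · have hΛ0' : Λ ⟨(j : ℕ), hj⟩ = 0 := by
            rw [hΛdef]; simp only [hcast, hν, Real.sqrt_zero]
          have hYj : Y r j = 0 := by
            have : (⟨(j : ℕ), hj2⟩ : Fin n₂) = j := Fin.ext rfl
            rw [← this] at *
            exact hYzero _ hν r
          rw [hΛ0', hYj, mul_zero]
        · have hmem : (⟨(j : ℕ), hj1⟩ : Fin n₁) ∈ s := ⟨hj2, hν⟩
          have hbv := hb _ hmem
          have hVrj : V r ⟨(j : ℕ), hj1⟩ = Y r ⟨(j : ℕ), hj2⟩ / Real.sqrt (ν ⟨(j : ℕ), hj2⟩) := by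
            rw [hVdef]
            simp only [Matrix.of_apply]
            rw [hbv]
            simp [hvdef, dif_pos hj2]
          rw [hVrj, hΛdef]
          simp only [hcast]
          rw [div_mul_cancel₀ _ (Real.sqrt_ne_zero'.mpr (lt_of_le_of_ne (hν0 _) (Ne.symm hν)))]
      · intro i _ hne
        have : rectDiag Λ i j = 0 := by
          simp only [rectDiag, Matrix.of_apply]
          rw [dif_neg]
          rintro ⟨h1, h2⟩
          exact hne (Fin.ext h1)
        rw [this, mul_zero]
      · intro h; exact absurd (Finset.mem_univ _) h
    · have hzero : ∀ i : Fin n₁, rectDiag Λ i j = 0 := by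
        intro i
        simp only [rectDiag, Matrix.of_apply]
        rw [dif_neg]
        rintro ⟨h1, h2⟩
        rw [h1] at h2
        exact hj h2
      have hν : ν j = 0 := by
        by_contra hν
        exact hj (hsupp j hν)
      rw [hYzero j hν r]
      exact (Finset.sum_eq_zero fun i _ => by rw [hzero i, mul_zero]).symm
  refine ⟨V, Λ, U, hVl, hVr, hUl, hUr, hΛ0, ?_⟩
  calc X = X * (U * Uᵀ) := by rw [hUr, Matrix.mul_one]
    _ = (X * U) * Uᵀ := by rw [Matrix.mul_assoc]
    _ = V * rectDiag Λ * Uᵀ := by rw [← hYdef, hYV]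


theorem key_lemma {n₁ n₂ : ℕ} {φ : (Fin (min n₁ n₂) → ℝ) → EReal}
    (hconv : ERealConvex φ)
    (hsym : ∀ (σ : Equiv.Perm (Fin (min n₁ n₂))) (Λ : Fin (min n₁ n₂) → ℝ),
      φ (fun i => Λ (σ i)) = φ Λ)
    (habs : ∀ Λ : Fin (min n₁ n₂) → ℝ, φ (fun i => |Λ i|) = φ Λ)
    {V : Matrix (Fin n₁) (Fin n₁) ℝ} {Λ : Fin (min n₁ n₂) → ℝ}
    {U : Matrix (Fin n₂) (Fin n₂) ℝ}
    (hV : Vᵀ * V = 1) (hV' : V * Vᵀ = 1) (hU : Uᵀ * U = 1) (hU' : U * Uᵀ = 1)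
    (hΛ : ∀ i, 0 ≤ Λ i) :
    φ (fun i => (V * rectDiag Λ * Uᵀ)
        (Fin.castLE (min_le_left n₁ n₂) i) (Fin.castLE (min_le_right n₁ n₂) i)) ≤ φ Λ := by
  classical
  set c₁ : Fin (min n₁ n₂) → Fin n₁ := Fin.castLE (min_le_left n₁ n₂) with hc₁
  set c₂ : Fin (min n₁ n₂) → Fin n₂ := Fin.castLE (min_le_right n₁ n₂) with hc₂
  set M : Matrix (Fin (min n₁ n₂)) (Fin (min n₁ n₂)) ℝ :=
    Matrix.of (fun i k => V (c₁ i) (c₁ k) * U (c₂ i) (c₂ k)) with hM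
  set x : Fin (min n₁ n₂) → ℝ := fun i => ∑ k, M i k * Λ k with hx
  -- the product of V with the rectangular diagonal matrix
  have hVR : ∀ (r : Fin n₁) (k : Fin n₂), (V * rectDiag Λ) r k =
      if h : (k : ℕ) < min n₁ n₂
      then V r ⟨(k : ℕ), lt_of_lt_of_le h (min_le_left n₁ n₂)⟩ * Λ ⟨(k : ℕ), h⟩ else 0 := by
    intro r k
    rw [Matrix.mul_apply]
    by_cases hk : (k : ℕ) < min n₁ n₂
    · rw [dif_pos hk]
      rw [Finset.sum_eq_single (⟨(k : ℕ), lt_of_lt_of_le hk (min_le_left n₁ n₂)⟩ : Fin n₁)]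
      · have hrd : rectDiag Λ ⟨(k : ℕ), lt_of_lt_of_le hk (min_le_left n₁ n₂)⟩ k
            = Λ ⟨(k : ℕ), hk⟩ := dif_pos ⟨rfl, hk⟩
        rw [hrd]
      · intro i _ hne
        have : rectDiag Λ i k = 0 := by
          apply dif_neg
          rintro ⟨h1, h2⟩
          exact hne (Fin.ext h1)
        rw [this, mul_zero]
      · intro h; exact absurd (Finset.mem_univ _) h
    · rw [dif_neg hk]
      apply Finset.sum_eq_zero
      intro i _
      have : rectDiag Λ i k = 0 := by
        apply dif_neg
        rintro ⟨h1, h2⟩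
        rw [h1] at h2
        exact hk h2
      rw [this, mul_zero]
  have hentry : ∀ i, (V * rectDiag Λ * Uᵀ) (c₁ i) (c₂ i) = x i := by
    intro i
    rw [Matrix.mul_apply]
    have hterm : ∀ k : Fin n₂, (V * rectDiag Λ) (c₁ i) k * Uᵀ k (c₂ i)
        = if h : (k : ℕ) < min n₁ n₂
          then V (c₁ i) ⟨(k : ℕ), lt_of_lt_of_le h (min_le_left n₁ n₂)⟩ * Λ ⟨(k : ℕ), h⟩
            * U (c₂ i) k else 0 := by
      intro k
      rw [hVR, Matrix.transpose_apply]
      by_cases hk : (k : ℕ) < min n₁ n₂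
      · rw [dif_pos hk, dif_pos hk]
      · rw [dif_neg hk, dif_neg hk, zero_mul]
    simp only [hterm]
    rw [sum_castLE (min_le_right n₁ n₂) _ (fun k hk => by rw [dif_neg hk])]
    apply Finset.sum_congr rfl
    intro k _
    have hklt : ((Fin.castLE (min_le_right n₁ n₂) k : Fin n₂) : ℕ) < min n₁ n₂ := k.isLt
    rw [dif_pos hklt]
    show V (c₁ i) (c₁ k) * Λ k * U (c₂ i) (c₂ k) = M i k * Λ k
    rw [hM]
    simp only [Matrix.of_apply]
    ring
  -- row and column sums of |M| are at most 1
  have hsq_sum_row_V : ∀ r : Fin n₁, ∑ t, V r t ^ 2 = 1 := by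
    intro r
    have h := congrFun (congrFun hV' r) r
    rw [Matrix.mul_apply] at h
    simp only [Matrix.transpose_apply, Matrix.one_apply_eq] at h
    rw [← h]
    exact Finset.sum_congr rfl fun t _ => pow_two (V r t)
  have hsq_sum_col_V : ∀ t : Fin n₁, ∑ r, V r t ^ 2 = 1 := by
    intro t
    have h := congrFun (congrFun hV t) t
    rw [Matrix.mul_apply] at h
    simp only [Matrix.transpose_apply, Matrix.one_apply_eq] at h
    rw [← h]
    exact Finset.sum_congr rfl fun r _ => pow_two (V r t)
  have hsq_sum_row_U : ∀ r : Fin n₂, ∑ t, U r t ^ 2 = 1 := by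
    intro r
    have h := congrFun (congrFun hU' r) r
    rw [Matrix.mul_apply] at h
    simp only [Matrix.transpose_apply, Matrix.one_apply_eq] at h
    rw [← h]
    exact Finset.sum_congr rfl fun t _ => pow_two (U r t)
  have hsq_sum_col_U : ∀ t : Fin n₂, ∑ r, U r t ^ 2 = 1 := by
    intro t
    have h := congrFun (congrFun hU t) t
    rw [Matrix.mul_apply] at h
    simp only [Matrix.transpose_apply, Matrix.one_apply_eq] at h
    rw [← h]
    exact Finset.sum_congr rfl fun r _ => pow_two (U r t)
  have habs_bound : ∀ (f g : Fin (min n₁ n₂) → ℝ),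
      (∑ k, f k ^ 2) ≤ 1 → (∑ k, g k ^ 2) ≤ 1 → ∑ k, |f k * g k| ≤ 1 := by
    intro f g hf hg
    have h1 : (∑ k, |f k * g k|) ^ 2 ≤ (∑ k, |f k| ^ 2) * (∑ k, |g k| ^ 2) := by
      have := Finset.sum_mul_sq_le_sq_mul_sq Finset.univ (fun k => |f k|) (fun k => |g k|)
      simpa [abs_mul] using this
    simp only [sq_abs] at h1
    have h2 : (∑ k, |f k * g k|) ^ 2 ≤ 1 :=
      h1.trans (mul_le_one₀ hf (Finset.sum_nonneg fun k _ => sq_nonneg _) hg)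
    have h3 : 0 ≤ ∑ k, |f k * g k| := Finset.sum_nonneg fun k _ => abs_nonneg _
    nlinarith
  have hrow : ∀ i, ∑ k, |M i k| ≤ 1 := by
    intro i
    have : ∀ k, |M i k| = |V (c₁ i) (c₁ k) * U (c₂ i) (c₂ k)| := fun k => rfl
    simp only [this]
    apply habs_bound
    · have := sum_sq_castLE (min_le_left n₁ n₂) (fun t => V (c₁ i) t)
      rw [hsq_sum_row_V (c₁ i)] at this
      exact this
    · have := sum_sq_castLE (min_le_right n₁ n₂) (fun t => U (c₂ i) t)
      rw [hsq_sum_row_U (c₂ i)] at this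
      exact this
  have hcol : ∀ k, ∑ i, |M i k| ≤ 1 := by
    intro k
    have : ∀ i, |M i k| = |V (c₁ i) (c₁ k) * U (c₂ i) (c₂ k)| := fun i => rfl
    simp only [this]
    apply habs_bound
    · have := sum_sq_castLE (min_le_left n₁ n₂) (fun t => V t (c₁ k))
      rw [hsq_sum_col_V (c₁ k)] at this
      exact this
    · have := sum_sq_castLE (min_le_right n₁ n₂) (fun t => U t (c₂ k))
      rw [hsq_sum_col_U (c₂ k)] at this
      exact this
  -- the doubly stochastic dilation
  set S : Matrix (Fin (min n₁ n₂) ⊕ Fin (min n₁ n₂)) (Fin (min n₁ n₂) ⊕ Fin (min n₁ n₂)) ℝ :=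
    Matrix.of (fun p q =>
      match p, q with
      | Sum.inl i, Sum.inl k => |M i k|
      | Sum.inl i, Sum.inr k => if i = k then 1 - ∑ t, |M i t| else 0
      | Sum.inr i, Sum.inl k => if i = k then 1 - ∑ t, |M t i| else 0
      | Sum.inr i, Sum.inr k => |M k i|) with hS
  have hSmem : S ∈ doublyStochastic ℝ (Fin (min n₁ n₂) ⊕ Fin (min n₁ n₂)) := by
    rw [mem_doublyStochastic_iff_sum]
    refine ⟨?_, ?_, ?_⟩
    · rintro (i | i) (k | k)
      · exact abs_nonneg _
      · show (0:ℝ) ≤ if i = k then 1 - ∑ t, |M i t| else 0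
        split_ifs
        · linarith [hrow i]
        · exact le_refl 0
      · show (0:ℝ) ≤ if i = k then 1 - ∑ t, |M t i| else 0
        split_ifs
        · linarith [hcol i]
        · exact le_refl 0
      · exact abs_nonneg _
    · rintro (i | i)
      · rw [Fintype.sum_sum_type]
        have h1 : ∑ k, S (Sum.inl i) (Sum.inl k) = ∑ k, |M i k| := rfl
        have h2 : ∑ k, S (Sum.inl i) (Sum.inr k) = 1 - ∑ t, |M i t| := by
          show (∑ k, if i = k then 1 - ∑ t, |M i t| else 0) = _
          simp
        rw [h1, h2]
        ring
      · rw [Fintype.sum_sum_type]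
        have h1 : ∑ k, S (Sum.inr i) (Sum.inl k) = 1 - ∑ t, |M t i| := by
          show (∑ k, if i = k then 1 - ∑ t, |M t i| else 0) = _
          simp
        have h2 : ∑ k, S (Sum.inr i) (Sum.inr k) = ∑ k, |M k i| := rfl
        rw [h1, h2]
        ring
    · rintro (k | k)
      · rw [Fintype.sum_sum_type]
        have h1 : ∑ i, S (Sum.inl i) (Sum.inl k) = ∑ i, |M i k| := rfl
        have h2 : ∑ i, S (Sum.inr i) (Sum.inl k) = 1 - ∑ t, |M t k| := by
          show (∑ i, if i = k then 1 - ∑ t, |M t i| else 0) = _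
          rw [Finset.sum_ite_eq' Finset.univ k (fun i => 1 - ∑ t, |M t i|)]
          simp
        rw [h1, h2]
        ring
      · rw [Fintype.sum_sum_type]
        have h1 : ∑ i, S (Sum.inl i) (Sum.inr k) = 1 - ∑ t, |M k t| := by
          show (∑ i, if i = k then 1 - ∑ t, |M i t| else 0) = _
          rw [Finset.sum_ite_eq' Finset.univ k (fun i => 1 - ∑ t, |M i t|)]
          simp
        have h2 : ∑ i, S (Sum.inr i) (Sum.inr k) = ∑ i, |M k i| := rfl
        rw [h1, h2]
        ring
  obtain ⟨w, hw0, hw1, hwsum⟩ := exists_eq_sum_perm_of_mem_doublyStochastic hSmem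
  set z : Equiv.Perm (Fin (min n₁ n₂) ⊕ Fin (min n₁ n₂)) → Fin (min n₁ n₂) → ℝ :=
    fun P i => Sum.elim Λ 0 (P (Sum.inl i)) with hz
  set y : Fin (min n₁ n₂) → ℝ := fun i => ∑ k, |M i k| * Λ k with hy
  have hzP : ∀ P (i : Fin (min n₁ n₂)),
      z P i = ∑ k, P.permMatrix ℝ (Sum.inl i) (Sum.inl k) * Λ k := by
    intro P i
    rcases hPi : P (Sum.inl i) with j | j
    · show Sum.elim Λ 0 (P (Sum.inl i)) = _
      rw [hPi]
      simp only [Sum.elim_inl]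
      symm
      rw [Finset.sum_eq_single j]
      · have : P.permMatrix ℝ (Sum.inl i) (Sum.inl j) = 1 := by
          simp [Equiv.Perm.permMatrix, PEquiv.toMatrix_apply, Equiv.toPEquiv_apply, hPi]
        rw [this, one_mul]
      · intro k _ hk
        have : P.permMatrix ℝ (Sum.inl i) (Sum.inl k) = 0 := by
          simp only [Equiv.Perm.permMatrix, PEquiv.toMatrix_apply, Equiv.toPEquiv_apply,
            Option.mem_def, Option.some.injEq, hPi]
          rw [if_neg]
          intro hcon
          exact hk (Sum.inl_injective hcon.symm)
        rw [this, zero_mul]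
      · intro h; exact absurd (Finset.mem_univ _) h
    · show Sum.elim Λ 0 (P (Sum.inl i)) = _
      rw [hPi]
      simp only [Sum.elim_inr]
      symm
      apply Finset.sum_eq_zero
      intro k _
      have : P.permMatrix ℝ (Sum.inl i) (Sum.inl k) = 0 := by
        simp only [Equiv.Perm.permMatrix, PEquiv.toMatrix_apply, Equiv.toPEquiv_apply,
          Option.mem_def, Option.some.injEq, hPi]
        rw [if_neg]
        intro hcon
        exact Sum.inr_ne_inl hcon
      rw [this, zero_mul]
  have hyz : y = ∑ P, w P • z P := by
    funext i
    have hSik : ∀ k, |M i k| = ∑ P, w P * P.permMatrix ℝ (Sum.inl i) (Sum.inl k) := by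
      intro k
      have h := congrFun (congrFun hwsum (Sum.inl i)) (Sum.inl k)
      have h2 : (∑ P : Equiv.Perm (Fin (min n₁ n₂) ⊕ Fin (min n₁ n₂)), w P • P.permMatrix ℝ)
          (Sum.inl i) (Sum.inl k)
          = ∑ P : Equiv.Perm (Fin (min n₁ n₂) ⊕ Fin (min n₁ n₂)),
            w P * P.permMatrix ℝ (Sum.inl i) (Sum.inl k) := by
        simp [Matrix.sum_apply]
      rw [h2] at h
      rw [h]
      rfl
    have hcalc : (∑ P, w P • z P) i
        = ∑ P : Equiv.Perm (Fin (min n₁ n₂) ⊕ Fin (min n₁ n₂)), w P * z P i := by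
      simp [Finset.sum_apply]
    rw [hcalc]
    show ∑ k, |M i k| * Λ k = _
    calc ∑ k, |M i k| * Λ k
        = ∑ k, (∑ P, w P * P.permMatrix ℝ (Sum.inl i) (Sum.inl k)) * Λ k := by
          exact Finset.sum_congr rfl fun k _ => by rw [← hSik k]
      _ = ∑ k, ∑ P, w P * P.permMatrix ℝ (Sum.inl i) (Sum.inl k) * Λ k := by
          exact Finset.sum_congr rfl fun k _ => by rw [Finset.sum_mul]
      _ = ∑ P, ∑ k, w P * P.permMatrix ℝ (Sum.inl i) (Sum.inl k) * Λ k := Finset.sum_comm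
      _ = ∑ P, w P * z P i := by
          refine Finset.sum_congr rfl fun P _ => ?_
          rw [hzP P i, Finset.mul_sum]
          exact Finset.sum_congr rfl fun k _ => by ring
  have hxy : ∀ i, |x i| ≤ y i := by
    intro i
    calc |x i| ≤ ∑ k, |M i k * Λ k| := Finset.abs_sum_le_sum_abs _ _
      _ = y i := Finset.sum_congr rfl fun k _ => by rw [abs_mul, abs_of_nonneg (hΛ k)]
  have hzle : ∀ P, φ (z P) ≤ φ Λ := by
    intro P
    obtain ⟨π, hπ⟩ := exists_perm_dominating P
    have hz0 : ∀ i, 0 ≤ z P i := by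
      intro i
      show 0 ≤ Sum.elim Λ 0 (P (Sum.inl i))
      rcases h : P (Sum.inl i) with j | j
      · simp [hΛ j]
      · simp
    have h1 : φ (z P) ≤ φ (fun i => Λ (π i)) := by
      apply phi_mono_abs hconv habs
      intro i
      rw [abs_of_nonneg (hz0 i)]
      exact hπ i Λ hΛ
    exact h1.trans (le_of_eq (hsym π Λ))
  have hfin : φ x ≤ φ Λ := by
    have h1 : φ x ≤ φ y := phi_mono_abs hconv habs hxy
    have h2 : φ y ≤ φ Λ := by
      rw [hyz]
      exact jensen_finset hconv Finset.univ w z (φ Λ) (fun P _ => hw0 P) hw1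
        (fun P _ => hzle P)
    exact h1.trans h2
  have hxeq : (fun i => (V * rectDiag Λ * Uᵀ) (c₁ i) (c₂ i)) = x := funext hentry
  rw [hxeq]
  exact hfin

lemma orth_mul {n : ℕ} {W V : Matrix (Fin n) (Fin n) ℝ}
    (hW : W * Wᵀ = 1) (hV : Vᵀ * V = 1) : (Wᵀ * V)ᵀ * (Wᵀ * V) = 1 := by
  rw [Matrix.transpose_mul, Matrix.transpose_transpose, Matrix.mul_assoc,
    ← Matrix.mul_assoc W Wᵀ V, hW, Matrix.one_mul, hV]

/-- A scalar-valued spectral function `J(X) = φ(Λ_X)`, where `φ : ℝ^n → ℝ ∪ {∞}` is a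
proper lower semi-continuous symmetric function extended by `φ(Λ) = φ(|Λ|)`, is convex
if and only if `φ` is convex. -/
theorem spectral_function_convex_iff {n₁ n₂ : ℕ}
    (φ : (Fin (min n₁ n₂) → ℝ) → EReal)
    (hproper_top : ∃ Λ, φ Λ ≠ ⊤) (hproper_bot : ∀ Λ, φ Λ ≠ ⊥)
    (hlsc : LowerSemicontinuous φ)
    (hsym : ∀ (σ : Equiv.Perm (Fin (min n₁ n₂))) (Λ : Fin (min n₁ n₂) → ℝ),
      φ (fun i => Λ (σ i)) = φ Λ)
    (habs : ∀ Λ : Fin (min n₁ n₂) → ℝ, φ (fun i => |Λ i|) = φ Λ)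
    (J : Matrix (Fin n₁) (Fin n₂) ℝ → EReal)
    (hJ : ∀ X V Λ U, IsSVD X V Λ U → J X = φ Λ) :
    ERealConvex J ↔ ERealConvex φ := by
  constructor
  · -- J convex → φ convex
    intro hJc
    have hsvd : ∀ Θ : Fin (min n₁ n₂) → ℝ, J (rectDiag Θ) = φ Θ := by
      intro Θ
      set sg : Fin n₁ → ℝ := fun i =>
        if h : (i : ℕ) < min n₁ n₂ then (if Θ ⟨(i : ℕ), h⟩ < 0 then -1 else 1) else 1 with hsg
      have hsg1 : ∀ i, sg i * sg i = 1 := by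
        intro i; rw [hsg]; dsimp only; split_ifs <;> norm_num
      have hVl : (Matrix.diagonal sg)ᵀ * (Matrix.diagonal sg) = 1 := by
        rw [Matrix.diagonal_transpose, Matrix.diagonal_mul_diagonal]
        have h1 : (fun i => sg i * sg i) = fun _ => (1 : ℝ) := funext hsg1
        rw [h1, Matrix.diagonal_one]
      have hmain : rectDiag Θ
          = Matrix.diagonal sg * rectDiag (fun i => |Θ i|) * (1 : Matrix (Fin n₂) (Fin n₂) ℝ)ᵀ := by
        rw [Matrix.transpose_one, Matrix.mul_one]
        ext i j
        rw [Matrix.diagonal_mul]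
        show (if h : (i : ℕ) = (j : ℕ) ∧ (i : ℕ) < min n₁ n₂ then Θ ⟨(i : ℕ), h.2⟩ else 0)
          = sg i * (if h : (i : ℕ) = (j : ℕ) ∧ (i : ℕ) < min n₁ n₂ then |Θ ⟨(i : ℕ), h.2⟩| else 0)
        by_cases h : (i : ℕ) = (j : ℕ) ∧ (i : ℕ) < min n₁ n₂
        · rw [dif_pos h, dif_pos h, hsg]
          dsimp only
          rw [dif_pos h.2]
          split_ifs with hneg
          · rw [abs_of_neg hneg]; ring
          · rw [abs_of_nonneg (not_lt.mp hneg)]; ring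
        · rw [dif_neg h, dif_neg h, mul_zero]
      have hIs : IsSVD (rectDiag Θ) (Matrix.diagonal sg) (fun i => |Θ i|) 1 :=
        ⟨hVl, mul_eq_one_comm.mp hVl, by simp, by simp, fun i => abs_nonneg _, hmain⟩
      rw [hJ _ _ _ _ hIs, habs]
    intro Λ Λ' a b ha hb hab
    have hlin : rectDiag (a • Λ + b • Λ') = a • rectDiag Λ + b • rectDiag Λ' := by
      ext i j
      show (if h : (i : ℕ) = (j : ℕ) ∧ (i : ℕ) < min n₁ n₂
          then (a • Λ + b • Λ') ⟨(i : ℕ), h.2⟩ else 0)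
        = a * (if h : (i : ℕ) = (j : ℕ) ∧ (i : ℕ) < min n₁ n₂ then Λ ⟨(i : ℕ), h.2⟩ else 0)
          + b * (if h : (i : ℕ) = (j : ℕ) ∧ (i : ℕ) < min n₁ n₂ then Λ' ⟨(i : ℕ), h.2⟩ else 0)
      by_cases h : (i : ℕ) = (j : ℕ) ∧ (i : ℕ) < min n₁ n₂
      · rw [dif_pos h, dif_pos h, dif_pos h]
        simp [Pi.add_apply, Pi.smul_apply, smul_eq_mul]
      · rw [dif_neg h, dif_neg h, dif_neg h]
        ring
    rw [← hsvd (a • Λ + b • Λ'), ← hsvd Λ, ← hsvd Λ', hlin]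
    exact hJc _ _ a b ha hb hab
  · -- φ convex → J convex
    intro hφ X Y a b ha hb hab
    obtain ⟨W, τ, T, hW⟩ := exists_svd (a • X + b • Y)
    obtain ⟨V₁, Λ₁, U₁, h₁⟩ := exists_svd X
    obtain ⟨V₂, Λ₂, U₂, h₂⟩ := exists_svd Y
    rw [hJ _ _ _ _ hW, hJ _ _ _ _ h₁, hJ _ _ _ _ h₂]
    obtain ⟨hWl, hWr, hTl, hTr, hτ0, hZ⟩ := hW
    obtain ⟨hV₁l, hV₁r, hU₁l, hU₁r, hΛ₁0, hX⟩ := h₁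
    obtain ⟨hV₂l, hV₂r, hU₂l, hU₂r, hΛ₂0, hY⟩ := h₂
    set c₁ : Fin (min n₁ n₂) → Fin n₁ := Fin.castLE (min_le_left n₁ n₂) with hc₁
    set c₂ : Fin (min n₁ n₂) → Fin n₂ := Fin.castLE (min_le_right n₁ n₂) with hc₂
    set d₁ : Fin (min n₁ n₂) → ℝ := fun i => (Wᵀ * X * T) (c₁ i) (c₂ i) with hd₁
    set d₂ : Fin (min n₁ n₂) → ℝ := fun i => (Wᵀ * Y * T) (c₁ i) (c₂ i) with hd₂
    have hWZT : rectDiag τ = Wᵀ * (a • X + b • Y) * T := by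
      rw [hZ, ← Matrix.mul_assoc Wᵀ (W * rectDiag τ) Tᵀ,
        ← Matrix.mul_assoc Wᵀ W (rectDiag τ), hWl, Matrix.one_mul,
        Matrix.mul_assoc (rectDiag τ) Tᵀ T, hTl, Matrix.mul_one]
    have hlin2 : Wᵀ * (a • X + b • Y) * T = a • (Wᵀ * X * T) + b • (Wᵀ * Y * T) := by
      rw [Matrix.mul_add, Matrix.add_mul, Matrix.mul_smul, Matrix.smul_mul,
        Matrix.mul_smul, Matrix.smul_mul]
    have hτd : τ = a • d₁ + b • d₂ := by
      funext i
      have hτi : rectDiag τ (c₁ i) (c₂ i) = τ i := dif_pos ⟨rfl, i.isLt⟩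
      show τ i = (a • d₁ + b • d₂) i
      rw [← hτi, hWZT, hlin2]
      simp [Matrix.add_apply, Matrix.smul_apply, smul_eq_mul]
      rfl
    have hk₁ : φ d₁ ≤ φ Λ₁ := by
      have hXWT : Wᵀ * X * T = (Wᵀ * V₁) * rectDiag Λ₁ * (Tᵀ * U₁)ᵀ := by
        rw [hX, Matrix.transpose_mul, Matrix.transpose_transpose]
        simp only [Matrix.mul_assoc]
      have o1 : (Wᵀ * V₁)ᵀ * (Wᵀ * V₁) = 1 := orth_mul hWr hV₁l
      have o3 : (Tᵀ * U₁)ᵀ * (Tᵀ * U₁) = 1 := orth_mul hTr hU₁l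
      have hkey := key_lemma hφ hsym habs o1 (mul_eq_one_comm.mp o1) o3
        (mul_eq_one_comm.mp o3) hΛ₁0
      have hde : d₁ = fun i => ((Wᵀ * V₁) * rectDiag Λ₁ * (Tᵀ * U₁)ᵀ) (c₁ i) (c₂ i) := by
        funext i
        rw [hd₁]
        dsimp only
        rw [hXWT]
      rw [hde]
      exact hkey
    have hk₂ : φ d₂ ≤ φ Λ₂ := by
      have hYWT : Wᵀ * Y * T = (Wᵀ * V₂) * rectDiag Λ₂ * (Tᵀ * U₂)ᵀ := by
        rw [hY, Matrix.transpose_mul, Matrix.transpose_transpose]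
        simp only [Matrix.mul_assoc]
      have o1 : (Wᵀ * V₂)ᵀ * (Wᵀ * V₂) = 1 := orth_mul hWr hV₂l
      have o3 : (Tᵀ * U₂)ᵀ * (Tᵀ * U₂) = 1 := orth_mul hTr hU₂l
      have hkey := key_lemma hφ hsym habs o1 (mul_eq_one_comm.mp o1) o3
        (mul_eq_one_comm.mp o3) hΛ₂0
      have hde : d₂ = fun i => ((Wᵀ * V₂) * rectDiag Λ₂ * (Tᵀ * U₂)ᵀ) (c₁ i) (c₂ i) := by
        funext i
        rw [hd₂]
        dsimp only
        rw [hYWT]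
      rw [hde]
      exact hkey
    calc φ τ = φ (a • d₁ + b • d₂) := by rw [← hτd]
      _ ≤ (a : EReal) * φ d₁ + (b : EReal) * φ d₂ := hφ d₁ d₂ a b ha hb hab
      _ ≤ (a : EReal) * φ Λ₁ + (b : EReal) * φ Λ₂ :=
          add_le_add (mul_le_mul_of_nonneg_left hk₁ (EReal.coe_nonneg.mpr ha))
            (mul_le_mul_of_nonneg_left hk₂ (EReal.coe_nonneg.mpr hb))
end

section
/- Let J(X) = φ(Λ_X) be a convex scalar-valued spectral function on ℝ^{n₁×n₂}, where φ is a proper lsc convex symmetric function on ℝ^n (n = min(n₁,n₂)) extended by φ(Λ) = φ(|Λ|). Then for every γ > 0 and every X with SVD X = V_X diag(Λ_X) U_X^*, the proximity operator satisfies Prox_{γJ}(X) = V_X diag(Prox_{γφ}(Λ_X)) U_X^*. -/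
open Matrix

/-- The objective function of the proximity operator of `γ • φ` at `t`
(vector version, squared Euclidean norm). -/
noncomputable def proxObjVec {n : ℕ} (γ : ℝ) (φ : (Fin n → ℝ) → EReal)
    (t z : Fin n → ℝ) : EReal :=
  (((1 / 2 : ℝ) * ∑ i, (t i - z i) ^ 2 : ℝ) : EReal) + (γ : EReal) * φ z

/-- The objective function of the proximity operator of `γ • J` at `X`
(matrix version, squared Frobenius norm). -/
noncomputable def proxObjMat {n₁ n₂ : ℕ} (γ : ℝ)
    (J : Matrix (Fin n₁) (Fin n₂) ℝ → EReal)
    (X Z : Matrix (Fin n₁) (Fin n₂) ℝ) : EReal :=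
  (((1 / 2 : ℝ) * ∑ i, ∑ j, (X i j - Z i j) ^ 2 : ℝ) : EReal) + (γ : EReal) * J Z

open Finset RealInnerProductSpace

namespace ProxAux

variable {n₁ n₂ : ℕ}

def c1 (k : Fin (min n₁ n₂)) : Fin n₁ := ⟨k, lt_of_lt_of_le k.2 (min_le_left _ _)⟩
def c2 (k : Fin (min n₁ n₂)) : Fin n₂ := ⟨k, lt_of_lt_of_le k.2 (min_le_right _ _)⟩

lemma rectDiag_apply (u : Fin (min n₁ n₂) → ℝ) (i : Fin n₁) (j : Fin n₂) :
    rectDiag u i j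
      = if h : (i : ℕ) = (j : ℕ) ∧ (i : ℕ) < min n₁ n₂ then u ⟨(i : ℕ), h.2⟩ else 0 := rfl

lemma rectDiag_apply_c (v : Fin (min n₁ n₂) → ℝ) (k : Fin (min n₁ n₂)) :
    rectDiag v (c1 k) (c2 k) = v k := by
  rw [rectDiag_apply, dif_pos ⟨rfl, k.2⟩]
  exact congrArg v (Fin.ext rfl)

lemma rectDiag_eq_zero {v : Fin (min n₁ n₂) → ℝ} {i : Fin n₁} {j : Fin n₂}
    (h : ¬((i : ℕ) = (j : ℕ) ∧ (i : ℕ) < min n₁ n₂)) : rectDiag v i j = 0 := dif_neg h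

/-- Collapse a `Fin n`-sum of a dite-guarded function to a `Fin m`-sum, `m ≤ n`. -/
lemma sum_dite_lt {n m : ℕ} (h : m ≤ n) (g : Fin m → ℝ) :
    ∑ i : Fin n, (if h' : (i : ℕ) < m then g ⟨i, h'⟩ else 0) = ∑ k : Fin m, g k := by
  set G : ℕ → ℝ := fun i => if h' : i < m then g ⟨i, h'⟩ else 0 with hG
  have h1 : ∑ i : Fin n, (if h' : (i : ℕ) < m then g ⟨i, h'⟩ else 0) = ∑ i ∈ range n, G i := by
    rw [← Fin.sum_univ_eq_sum_range]
  have h2 : ∑ k : Fin m, g k = ∑ i ∈ range m, G i := by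
    rw [← Fin.sum_univ_eq_sum_range]
    refine Finset.sum_congr rfl fun k _ => ?_
    simp [hG]
  rw [h1, h2]
  refine (Finset.sum_subset (Finset.range_subset_range.2 h) fun x _ hx => ?_).symm
  simp only [Finset.mem_range, not_lt] at hx
  simp [hG, Nat.not_lt.2 hx]

lemma sum_rectDiag_mul (v : Fin (min n₁ n₂) → ℝ) (f : Fin n₁ → Fin n₂ → ℝ) :
    ∑ i : Fin n₁, ∑ j : Fin n₂, rectDiag v i j * f i j
      = ∑ k : Fin (min n₁ n₂), v k * f (c1 k) (c2 k) := by
  have hinner : ∀ i : Fin n₁, ∑ j : Fin n₂, rectDiag v i j * f i j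
      = (if h' : (i : ℕ) < min n₁ n₂ then
          v ⟨(i : ℕ), h'⟩ * f (c1 ⟨(i : ℕ), h'⟩) (c2 ⟨(i : ℕ), h'⟩) else 0) := by
    intro i
    by_cases h : (i : ℕ) < min n₁ n₂
    · rw [dif_pos h]
      rw [Finset.sum_eq_single (c2 ⟨(i : ℕ), h⟩)]
      · have hc1 : c1 (⟨(i : ℕ), h⟩ : Fin (min n₁ n₂)) = i := Fin.ext rfl
        rw [hc1]
        congr 1
        rw [rectDiag_apply, dif_pos ⟨rfl, h⟩]
      · intro j _ hj
        have hcond : ¬((i : ℕ) = (j : ℕ) ∧ (i : ℕ) < min n₁ n₂) := by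
          rintro ⟨h1, -⟩
          exact hj (Fin.ext h1.symm)
        rw [rectDiag_eq_zero hcond, zero_mul]
      · intro hmem; exact absurd (Finset.mem_univ _) hmem
    · rw [dif_neg h]
      refine Finset.sum_eq_zero fun j _ => ?_
      have hcond : ¬((i : ℕ) = (j : ℕ) ∧ (i : ℕ) < min n₁ n₂) := fun hc => h hc.2
      rw [rectDiag_eq_zero hcond, zero_mul]
  rw [Finset.sum_congr rfl fun i _ => hinner i]
  exact sum_dite_lt (min_le_left n₁ n₂) (fun k => v k * f (c1 k) (c2 k))

lemma mul_rectDiag_mul_apply (P : Matrix (Fin n₁) (Fin n₁) ℝ)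
    (R : Matrix (Fin n₂) (Fin n₂) ℝ) (b : Fin (min n₁ n₂) → ℝ) (u : Fin n₁) (v : Fin n₂) :
    (P * rectDiag b * R) u v
      = ∑ l : Fin (min n₁ n₂), b l * (P u (c1 l) * R (c2 l) v) := by
  have h0 : (P * rectDiag b * R) u v = ∑ j : Fin n₂, (∑ i, P u i * rectDiag b i j) * R j v := by
    simp [Matrix.mul_apply]
  rw [h0]
  have hinner : ∀ j : Fin n₂, (∑ i, P u i * rectDiag b i j) * R j v
      = (if h' : (j : ℕ) < min n₁ n₂ then
          b ⟨(j : ℕ), h'⟩ * (P u (c1 ⟨(j : ℕ), h'⟩) * R (c2 ⟨(j : ℕ), h'⟩) v) else 0) := by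
    intro j
    by_cases h : (j : ℕ) < min n₁ n₂
    · rw [dif_pos h]
      have hc2 : c2 (⟨(j : ℕ), h⟩ : Fin (min n₁ n₂)) = j := Fin.ext rfl
      rw [Finset.sum_eq_single (c1 ⟨(j : ℕ), h⟩)]
      · have : rectDiag b (c1 ⟨(j : ℕ), h⟩) j = b ⟨(j : ℕ), h⟩ := by
          rw [rectDiag_apply, dif_pos (⟨rfl, h⟩ : (↑(c1 ⟨(j : ℕ), h⟩) : ℕ) = (j : ℕ) ∧ (↑(c1 ⟨(j : ℕ), h⟩) : ℕ) < min n₁ n₂)]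
          exact congrArg b (Fin.ext rfl)
        rw [this, hc2]; ring
      · intro i _ hi
        have hcond : ¬((i : ℕ) = (j : ℕ) ∧ (i : ℕ) < min n₁ n₂) := by
          rintro ⟨h1, h2⟩
          exact hi (Fin.ext h1)
        rw [rectDiag_eq_zero hcond, mul_zero]
      · intro hmem; exact absurd (Finset.mem_univ _) hmem
    · rw [Finset.sum_eq_zero, zero_mul, dif_neg h]
      intro i _
      have hcond : ¬((i : ℕ) = (j : ℕ) ∧ (i : ℕ) < min n₁ n₂) := by
        rintro ⟨h1, h2⟩; exact h (h1 ▸ h2)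
      rw [rectDiag_eq_zero hcond, mul_zero]
  rw [Finset.sum_congr rfl fun j _ => hinner j]
  exact sum_dite_lt (min_le_right n₁ n₂) (fun l => b l * (P u (c1 l) * R (c2 l) v))

lemma sum_mul_rectDiag_fixed {n₁ n₂ : ℕ} (P : Matrix (Fin n₁) (Fin n₁) ℝ) (u : Fin n₁)
    (b : Fin (min n₁ n₂) → ℝ) (j : Fin n₂) :
    ∑ i : Fin n₁, P u i * rectDiag b i j
      = (if h : (j : ℕ) < min n₁ n₂ then
          b ⟨(j : ℕ), h⟩ * P u ⟨(j : ℕ), lt_of_lt_of_le h (min_le_left _ _)⟩ else 0) := by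
  by_cases h : (j : ℕ) < min n₁ n₂
  · rw [dif_pos h]
    rw [Finset.sum_eq_single (⟨(j : ℕ), lt_of_lt_of_le h (min_le_left _ _)⟩ : Fin n₁)]
    · have hval : rectDiag b (⟨(j : ℕ), lt_of_lt_of_le h (min_le_left _ _)⟩ : Fin n₁) j
          = b ⟨(j : ℕ), h⟩ := by
        rw [rectDiag_apply,
          dif_pos (⟨rfl, h⟩ :
            ((⟨(j : ℕ), lt_of_lt_of_le h (min_le_left _ _)⟩ : Fin n₁) : ℕ) = (j : ℕ) ∧
              ((⟨(j : ℕ), lt_of_lt_of_le h (min_le_left _ _)⟩ : Fin n₁) : ℕ) < min n₁ n₂)]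
      rw [hval]; ring
    · intro i _ hi
      have hcond : ¬((i : ℕ) = (j : ℕ) ∧ (i : ℕ) < min n₁ n₂) := by
        rintro ⟨h1, h2⟩
        exact hi (Fin.ext h1)
      rw [rectDiag_eq_zero hcond, mul_zero]
    · intro hmem; exact absurd (Finset.mem_univ _) hmem
  · rw [dif_neg h]
    refine Finset.sum_eq_zero fun i _ => ?_
    have hcond : ¬((i : ℕ) = (j : ℕ) ∧ (i : ℕ) < min n₁ n₂) := by
      rintro ⟨h1, h2⟩; exact h (h1 ▸ h2)
    rw [rectDiag_eq_zero hcond, mul_zero]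

/-- Frobenius inner product. -/
noncomputable def ip (A B : Matrix (Fin n₁) (Fin n₂) ℝ) : ℝ := Matrix.trace (Aᵀ * B)

lemma ip_eq_sum (A B : Matrix (Fin n₁) (Fin n₂) ℝ) :
    ip A B = ∑ i, ∑ j, A i j * B i j := by
  simp only [ip, Matrix.trace, Matrix.diag, Matrix.mul_apply, Matrix.transpose_apply]
  rw [Finset.sum_comm]

lemma ip_comm (A B : Matrix (Fin n₁) (Fin n₂) ℝ) : ip A B = ip B A := by
  simp only [ip_eq_sum]
  exact Finset.sum_congr rfl fun i _ => Finset.sum_congr rfl fun j _ => mul_comm _ _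

lemma ip_sub_right (A B C : Matrix (Fin n₁) (Fin n₂) ℝ) : ip A (B - C) = ip A B - ip A C := by
  simp [ip, Matrix.mul_sub]

lemma ip_sub_left (A B C : Matrix (Fin n₁) (Fin n₂) ℝ) : ip (A - B) C = ip A C - ip B C := by
  simp [ip, Matrix.sub_mul, Matrix.transpose_sub]

lemma ip_self_nonneg (A : Matrix (Fin n₁) (Fin n₂) ℝ) : 0 ≤ ip A A := by
  rw [ip_eq_sum]
  exact Finset.sum_nonneg fun i _ => Finset.sum_nonneg fun j _ => mul_self_nonneg _

lemma ip_conj_left {V : Matrix (Fin n₁) (Fin n₁) ℝ} {U : Matrix (Fin n₂) (Fin n₂) ℝ}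
    (A : Matrix (Fin n₁) (Fin n₂) ℝ) (B : Matrix (Fin n₁) (Fin n₂) ℝ) :
    ip (V * A * Uᵀ) B = ip A (Vᵀ * B * U) := by
  simp only [ip, Matrix.transpose_mul, Matrix.transpose_transpose, Matrix.mul_assoc]
  rw [Matrix.trace_mul_comm]
  simp only [Matrix.mul_assoc]

lemma ip_conj {V : Matrix (Fin n₁) (Fin n₁) ℝ} {U : Matrix (Fin n₂) (Fin n₂) ℝ}
    (hV : Vᵀ * V = 1) (hU : Uᵀ * U = 1)
    (A B : Matrix (Fin n₁) (Fin n₂) ℝ) :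
    ip (V * A * Uᵀ) (V * B * Uᵀ) = ip A B := by
  rw [ip_conj_left]
  rw [show Vᵀ * (V * B * Uᵀ) * U = Vᵀ * V * (B * (Uᵀ * U)) by
    simp only [Matrix.mul_assoc]]
  rw [hV, hU, Matrix.one_mul, Matrix.mul_one]

lemma ip_rectDiag (v w : Fin (min n₁ n₂) → ℝ) :
    ip (rectDiag v) (rectDiag w) = ∑ k, v k * w k := by
  rw [ip_eq_sum]; refine (sum_rectDiag_mul v (rectDiag w)).trans ?_
  exact Finset.sum_congr rfl fun k _ => by rw [rectDiag_apply_c]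

lemma rectDiag_sub (v w : Fin (min n₁ n₂) → ℝ) :
    rectDiag v - rectDiag w = rectDiag (fun k => v k - w k) := by
  ext i j
  rw [Matrix.sub_apply, rectDiag_apply, rectDiag_apply, rectDiag_apply]
  by_cases h : (i : ℕ) = (j : ℕ) ∧ (i : ℕ) < min n₁ n₂
  · rw [dif_pos h, dif_pos h, dif_pos h]
  · rw [dif_neg h, dif_neg h, dif_neg h, sub_zero]



/-- Telescoping: an antitone nonneg sequence vanishing from `m` on is the tail sum of its
 decrements. -/
lemma eq_sum_decrements {m : ℕ} (a : ℕ → ℝ) (ham : ∀ i, m ≤ i → a i = 0) (i : ℕ) (hi : i < m) :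
    a i = ∑ k ∈ range m, (if i ≤ k then a k - a (k + 1) else 0) := by
  have h1 : ∑ k ∈ range m, (if i ≤ k then a k - a (k + 1) else 0)
      = ∑ k ∈ Ico i m, (a k - a (k + 1)) := by
    rw [← Finset.sum_filter]
    congr 1
    ext x
    simp only [Finset.mem_filter, Finset.mem_range, Finset.mem_Ico]
    omega
  rw [h1, Finset.sum_Ico_eq_sum_range]
  have h2 : ∑ k ∈ range (m - i), (a (i + k) - a (i + k + 1))
      = a (i + 0) - a (i + (m - i)) := by
    have := Finset.sum_range_sub' (f := fun k => a (i + k)) (n := m - i)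
    simpa [Nat.add_assoc] using this
  rw [h2]
  have h3 : i + (m - i) = m := by omega
  rw [h3, ham m le_rfl, Nat.add_zero, sub_zero]


lemma sum_swap4 (s : Finset ℕ) (G : ℕ → ℕ → ℕ → ℕ → ℝ) :
    ∑ i ∈ s, ∑ j ∈ s, ∑ k ∈ s, ∑ l ∈ s, G i j k l
      = ∑ k ∈ s, ∑ l ∈ s, ∑ i ∈ s, ∑ j ∈ s, G i j k l := by
  calc ∑ i ∈ s, ∑ j ∈ s, ∑ k ∈ s, ∑ l ∈ s, G i j k l
      = ∑ i ∈ s, ∑ k ∈ s, ∑ j ∈ s, ∑ l ∈ s, G i j k l :=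
        Finset.sum_congr rfl fun i _ => Finset.sum_comm
    _ = ∑ k ∈ s, ∑ i ∈ s, ∑ j ∈ s, ∑ l ∈ s, G i j k l := Finset.sum_comm
    _ = ∑ k ∈ s, ∑ i ∈ s, ∑ l ∈ s, ∑ j ∈ s, G i j k l :=
        Finset.sum_congr rfl fun k _ => Finset.sum_congr rfl fun i _ => Finset.sum_comm
    _ = ∑ k ∈ s, ∑ l ∈ s, ∑ i ∈ s, ∑ j ∈ s, G i j k l :=
        Finset.sum_congr rfl fun k _ => Finset.sum_comm

lemma sum_ind_le (m k : ℕ) :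
    ∑ i ∈ range m, (if i ≤ k then (1 : ℝ) else 0) ≤ (k : ℝ) + 1 := by
  rw [Finset.sum_boole]
  have hsub : (range m).filter (fun i => i ≤ k) ⊆ range (k + 1) := by
    intro x hx
    simp only [Finset.mem_filter, Finset.mem_range] at hx ⊢
    omega
  have := Finset.card_le_card hsub
  rw [Finset.card_range] at this
  exact_mod_cast this

lemma N_eq {m : ℕ} (k l : ℕ) (hk : k < m) (hl : l < m) :
    ∑ i ∈ range m, ((if i ≤ k then (1 : ℝ) else 0) * (if i ≤ l then (1 : ℝ) else 0))
      = (min k l : ℝ) + 1 := by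
  have hbody : ∀ i, (if i ≤ k then (1 : ℝ) else 0) * (if i ≤ l then (1 : ℝ) else 0)
      = (if i ≤ min k l then (1 : ℝ) else 0) := by
    intro i
    by_cases h1 : i ≤ k <;> by_cases h2 : i ≤ l
    · rw [if_pos h1, if_pos h2, if_pos (Nat.le_min.2 ⟨h1, h2⟩), one_mul]
    · rw [if_pos h1, if_neg h2, if_neg (fun hc => h2 (Nat.le_min.1 hc).2), mul_zero]
    · rw [if_neg h1, if_pos h2, if_neg (fun hc => h1 (Nat.le_min.1 hc).1), zero_mul]
    · rw [if_neg h1, if_neg h2, if_neg (fun hc => h1 (Nat.le_min.1 hc).1), mul_zero]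
  rw [Finset.sum_congr rfl fun i _ => hbody i, Finset.sum_boole]
  have : (range m).filter (fun i => i ≤ min k l) = range (min k l + 1) := by
    ext x
    simp only [Finset.mem_filter, Finset.mem_range]
    omega
  rw [this, Finset.card_range]
  push_cast
  ring

/-- Key rearrangement bound: doubly substochastic weighting of products of two antitone
nonnegative sequences is dominated by the diagonal pairing. -/
lemma substochastic_bound_nat (m : ℕ) (a b : ℕ → ℝ) (C : ℕ → ℕ → ℝ)
    (ha : Antitone a) (hb : Antitone b)
    (ha0 : ∀ i, 0 ≤ a i) (hb0 : ∀ i, 0 ≤ b i)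
    (ham : ∀ i, m ≤ i → a i = 0) (hbm : ∀ i, m ≤ i → b i = 0)
    (hC0 : ∀ i j, 0 ≤ C i j)
    (hrow : ∀ i, ∑ j ∈ range m, C i j ≤ 1) (hcol : ∀ j, ∑ i ∈ range m, C i j ≤ 1) :
    ∑ i ∈ range m, ∑ j ∈ range m, a i * b j * C i j ≤ ∑ i ∈ range m, a i * b i := by
  set Δa : ℕ → ℝ := fun k => a k - a (k + 1) with hΔa
  set Δb : ℕ → ℝ := fun k => b k - b (k + 1) with hΔb
  have hΔa0 : ∀ k, 0 ≤ Δa k := fun k => sub_nonneg.2 (ha (Nat.le_succ k))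
  have hΔb0 : ∀ k, 0 ≤ Δb k := fun k => sub_nonneg.2 (hb (Nat.le_succ k))
  set T : ℕ → ℕ → ℝ := fun k l => ∑ i ∈ range m, ∑ j ∈ range m,
    ((if i ≤ k then (1 : ℝ) else 0) * (if j ≤ l then (1 : ℝ) else 0) * C i j) with hT
  -- LHS rewritten
  have hLHS : ∑ i ∈ range m, ∑ j ∈ range m, a i * b j * C i j
      = ∑ k ∈ range m, ∑ l ∈ range m, Δa k * Δb l * T k l := by
    have expand : ∀ i ∈ range m, ∀ j ∈ range m,
        a i * b j * C i j = ∑ k ∈ range m, ∑ l ∈ range m,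
          ((if i ≤ k then Δa k else 0) * ((if j ≤ l then Δb l else 0) * C i j)) := by
      intro i hi j hj
      rw [eq_sum_decrements a ham i (Finset.mem_range.1 hi),
          eq_sum_decrements b hbm j (Finset.mem_range.1 hj)]
      rw [Finset.sum_mul_sum, Finset.sum_mul]
      exact Finset.sum_congr rfl fun k _ => by
        rw [Finset.sum_mul]
        exact Finset.sum_congr rfl fun l _ => by ring
    rw [Finset.sum_congr rfl fun i hi => Finset.sum_congr rfl fun j hj => expand i hi j hj]
    rw [sum_swap4 (range m) (fun i j k l =>
      ((if i ≤ k then Δa k else 0) * ((if j ≤ l then Δb l else 0) * C i j)))]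
    refine Finset.sum_congr rfl fun k _ => Finset.sum_congr rfl fun l _ => ?_
    rw [hT]
    rw [Finset.mul_sum]
    refine Finset.sum_congr rfl fun i _ => ?_
    rw [Finset.mul_sum]
    refine Finset.sum_congr rfl fun j _ => ?_
    split_ifs <;> ring
  -- RHS rewritten
  have hRHS : ∑ i ∈ range m, a i * b i
      = ∑ k ∈ range m, ∑ l ∈ range m, Δa k * Δb l *
          (∑ i ∈ range m, ((if i ≤ k then (1 : ℝ) else 0) * (if i ≤ l then (1 : ℝ) else 0))) := by
    have expand : ∀ i ∈ range m,
        a i * b i = ∑ k ∈ range m, ∑ l ∈ range m,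
          ((if i ≤ k then Δa k else 0) * (if i ≤ l then Δb l else 0)) := by
      intro i hi
      rw [eq_sum_decrements a ham i (Finset.mem_range.1 hi),
          eq_sum_decrements b hbm i (Finset.mem_range.1 hi)]
      rw [Finset.sum_mul_sum]
    rw [Finset.sum_congr rfl fun i hi => expand i hi]
    rw [Finset.sum_comm]
    refine Finset.sum_congr rfl fun k _ => ?_
    rw [Finset.sum_comm]
    refine Finset.sum_congr rfl fun l _ => ?_
    rw [Finset.mul_sum]
    refine Finset.sum_congr rfl fun i _ => ?_
    split_ifs <;> ring
  rw [hLHS, hRHS]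
  refine Finset.sum_le_sum fun k hk => Finset.sum_le_sum fun l hl => ?_
  refine mul_le_mul_of_nonneg_left ?_ (mul_nonneg (hΔa0 k) (hΔb0 l))
  -- T k l ≤ min k l + 1 = N k l
  rw [N_eq k l (Finset.mem_range.1 hk) (Finset.mem_range.1 hl)]
  have hT1 : T k l ≤ (k : ℝ) + 1 := by
    rw [hT]
    calc ∑ i ∈ range m, ∑ j ∈ range m,
          ((if i ≤ k then (1 : ℝ) else 0) * (if j ≤ l then (1 : ℝ) else 0) * C i j)
        ≤ ∑ i ∈ range m, (if i ≤ k then (1 : ℝ) else 0) := by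
          refine Finset.sum_le_sum fun i _ => ?_
          have : ∑ j ∈ range m,
              ((if i ≤ k then (1 : ℝ) else 0) * (if j ≤ l then (1 : ℝ) else 0) * C i j)
              = (if i ≤ k then (1 : ℝ) else 0) *
                ∑ j ∈ range m, ((if j ≤ l then (1 : ℝ) else 0) * C i j) := by
            rw [Finset.mul_sum]
            exact Finset.sum_congr rfl fun j _ => by ring
          rw [this]
          by_cases h : i ≤ k
          · simp only [if_pos h, one_mul]
            calc ∑ j ∈ range m, ((if j ≤ l then (1 : ℝ) else 0) * C i j)
                ≤ ∑ j ∈ range m, C i j := by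
                  refine Finset.sum_le_sum fun j _ => ?_
                  split_ifs <;> simp [hC0 i j]
              _ ≤ 1 := hrow i
          · simp [if_neg h]
      _ ≤ (k : ℝ) + 1 := sum_ind_le m k
  have hT2 : T k l ≤ (l : ℝ) + 1 := by
    have hswap : T k l = ∑ j ∈ range m, ∑ i ∈ range m,
        ((if i ≤ k then (1 : ℝ) else 0) * (if j ≤ l then (1 : ℝ) else 0) * C i j) :=
      Finset.sum_comm
    rw [hswap]
    calc ∑ j ∈ range m, ∑ i ∈ range m,
          ((if i ≤ k then (1 : ℝ) else 0) * (if j ≤ l then (1 : ℝ) else 0) * C i j)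
        ≤ ∑ j ∈ range m, (if j ≤ l then (1 : ℝ) else 0) := by
          refine Finset.sum_le_sum fun j _ => ?_
          have : ∑ i ∈ range m,
              ((if i ≤ k then (1 : ℝ) else 0) * (if j ≤ l then (1 : ℝ) else 0) * C i j)
              = (if j ≤ l then (1 : ℝ) else 0) *
                ∑ i ∈ range m, ((if i ≤ k then (1 : ℝ) else 0) * C i j) := by
            rw [Finset.mul_sum]
            exact Finset.sum_congr rfl fun i _ => by ring
          rw [this]
          by_cases h : j ≤ l
          · simp only [if_pos h, one_mul]
            calc ∑ i ∈ range m, ((if i ≤ k then (1 : ℝ) else 0) * C i j)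
                ≤ ∑ i ∈ range m, C i j := by
                  refine Finset.sum_le_sum fun i _ => ?_
                  split_ifs <;> simp [hC0 i j]
              _ ≤ 1 := hcol j
          · simp [if_neg h]
      _ ≤ (l : ℝ) + 1 := sum_ind_le m l
  rcases le_total k l with h | h
  · rw [min_eq_left (show (k : ℝ) ≤ (l : ℝ) by exact_mod_cast h)]; exact hT1
  · rw [min_eq_right (show (l : ℝ) ≤ (k : ℝ) by exact_mod_cast h)]; exact hT2




lemma substochastic_bound_fin {m : ℕ} (a b : Fin m → ℝ) (ha : Antitone a) (hb : Antitone b)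
    (ha0 : ∀ i, 0 ≤ a i) (hb0 : ∀ i, 0 ≤ b i) (C : Fin m → Fin m → ℝ)
    (hC0 : ∀ i j, 0 ≤ C i j) (hrow : ∀ i, ∑ j, C i j ≤ 1) (hcol : ∀ j, ∑ i, C i j ≤ 1) :
    ∑ i, ∑ j, a i * b j * C i j ≤ ∑ i, a i * b i := by
  set a' : ℕ → ℝ := fun i => if h : i < m then a ⟨i, h⟩ else 0 with ha'
  set b' : ℕ → ℝ := fun i => if h : i < m then b ⟨i, h⟩ else 0 with hb'
  set C' : ℕ → ℕ → ℝ := fun i j =>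
    if h : i < m ∧ j < m then C ⟨i, h.1⟩ ⟨j, h.2⟩ else 0 with hC'
  have ha'anti : Antitone a' := by
    intro i j hij
    simp only [ha']
    by_cases hj : j < m
    · have hi : i < m := lt_of_le_of_lt hij hj
      rw [dif_pos hj, dif_pos hi]
      exact ha (show (⟨i, hi⟩ : Fin m) ≤ ⟨j, hj⟩ from hij)
    · rw [dif_neg hj]
      by_cases hi : i < m
      · rw [dif_pos hi]; exact ha0 _
      · rw [dif_neg hi]
  have hb'anti : Antitone b' := by
    intro i j hij
    simp only [hb']
    by_cases hj : j < m
    · have hi : i < m := lt_of_le_of_lt hij hj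
      rw [dif_pos hj, dif_pos hi]
      exact hb (show (⟨i, hi⟩ : Fin m) ≤ ⟨j, hj⟩ from hij)
    · rw [dif_neg hj]
      by_cases hi : i < m
      · rw [dif_pos hi]; exact hb0 _
      · rw [dif_neg hi]
  have ha'0 : ∀ i, 0 ≤ a' i := by
    intro i; simp only [ha']; split_ifs; exacts [ha0 _, le_rfl]
  have hb'0 : ∀ i, 0 ≤ b' i := by
    intro i; simp only [hb']; split_ifs; exacts [hb0 _, le_rfl]
  have ha'm : ∀ i, m ≤ i → a' i = 0 := by
    intro i hi; simp only [ha']; rw [dif_neg (Nat.not_lt.2 hi)]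
  have hb'm : ∀ i, m ≤ i → b' i = 0 := by
    intro i hi; simp only [hb']; rw [dif_neg (Nat.not_lt.2 hi)]
  have hC'0 : ∀ i j, 0 ≤ C' i j := by
    intro i j; simp only [hC']; split_ifs; exacts [hC0 _ _, le_rfl]
  have hrowfin : ∀ i : Fin m, ∀ j : Fin m, C' i j = C i j := by
    intro i j; simp only [hC']; rw [dif_pos ⟨i.2, j.2⟩]
  have hrow' : ∀ i, ∑ j ∈ range m, C' i j ≤ 1 := by
    intro i
    by_cases hi : i < m
    · have : ∑ j ∈ range m, C' i j = ∑ j : Fin m, C (⟨i, hi⟩ : Fin m) j := by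
        rw [← Fin.sum_univ_eq_sum_range]
        refine Finset.sum_congr rfl fun j _ => ?_
        simp only [hC']; rw [dif_pos ⟨hi, j.2⟩]
      rw [this]; exact hrow _
    · have : ∑ j ∈ range m, C' i j = 0 := by
        refine Finset.sum_eq_zero fun j _ => ?_
        simp only [hC']; rw [dif_neg (fun hc => hi hc.1)]
      rw [this]; norm_num
  have hcol' : ∀ j, ∑ i ∈ range m, C' i j ≤ 1 := by
    intro j
    by_cases hj : j < m
    · have : ∑ i ∈ range m, C' i j = ∑ i : Fin m, C i (⟨j, hj⟩ : Fin m) := by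
        rw [← Fin.sum_univ_eq_sum_range]
        refine Finset.sum_congr rfl fun i _ => ?_
        simp only [hC']; rw [dif_pos ⟨i.2, hj⟩]
      rw [this]; exact hcol _
    · have : ∑ i ∈ range m, C' i j = 0 := by
        refine Finset.sum_eq_zero fun i _ => ?_
        simp only [hC']; rw [dif_neg (fun hc => hj hc.2)]
      rw [this]; norm_num
  have key := substochastic_bound_nat m a' b' C' ha'anti hb'anti ha'0 hb'0 ha'm hb'm hC'0
    hrow' hcol'
  have hL : ∑ i, ∑ j, a i * b j * C i j = ∑ i ∈ range m, ∑ j ∈ range m, a' i * b' j * C' i j := by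
    rw [← Fin.sum_univ_eq_sum_range]
    refine Finset.sum_congr rfl fun i _ => ?_
    rw [← Fin.sum_univ_eq_sum_range]
    refine Finset.sum_congr rfl fun j _ => ?_
    simp only [ha', hb', hC']
    rw [dif_pos i.2, dif_pos j.2, dif_pos ⟨i.2, j.2⟩]
  have hR : ∑ i, a i * b i = ∑ i ∈ range m, a' i * b' i := by
    rw [← Fin.sum_univ_eq_sum_range]
    refine Finset.sum_congr rfl fun i _ => ?_
    simp only [ha', hb']
    rw [dif_pos i.2, dif_pos i.2]
  rw [hL, hR]
  exact key

lemma exists_antitone_perm {m : ℕ} (v : Fin m → ℝ) :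
    ∃ σ : Equiv.Perm (Fin m), Antitone (v ∘ σ) := by
  refine ⟨(Fin.revPerm).trans (Tuple.sort v), fun i j hij => ?_⟩
  exact Tuple.monotone_sort v (Fin.rev_le_rev.2 hij)

lemma sum_c1_le {n₁ n₂ : ℕ} (f : Fin n₁ → ℝ) (hf : ∀ z, 0 ≤ f z) :
    ∑ l : Fin (min n₁ n₂), f (c1 l) ≤ ∑ z, f z := by
  have hinj : Function.Injective (c1 (n₁ := n₁) (n₂ := n₂)) := by
    intro x y h
    have h2 := congrArg Fin.val h
    exact Fin.ext h2
  calc ∑ l : Fin (min n₁ n₂), f (c1 l)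
      = ∑ z ∈ Finset.univ.map ⟨c1, hinj⟩, f z := (Finset.sum_map Finset.univ ⟨c1, hinj⟩ f).symm
    _ ≤ ∑ z, f z :=
        Finset.sum_le_sum_of_subset_of_nonneg (Finset.subset_univ _) (fun z _ _ => hf z)

lemma sum_c2_le {n₁ n₂ : ℕ} (f : Fin n₂ → ℝ) (hf : ∀ z, 0 ≤ f z) :
    ∑ l : Fin (min n₁ n₂), f (c2 l) ≤ ∑ z, f z := by
  have hinj : Function.Injective (c2 (n₁ := n₁) (n₂ := n₂)) := by
    intro x y h
    have h2 := congrArg Fin.val h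
    exact Fin.ext h2
  calc ∑ l : Fin (min n₁ n₂), f (c2 l)
      = ∑ z ∈ Finset.univ.map ⟨c2, hinj⟩, f z := (Finset.sum_map Finset.univ ⟨c2, hinj⟩ f).symm
    _ ≤ ∑ z, f z :=
        Finset.sum_le_sum_of_subset_of_nonneg (Finset.subset_univ _) (fun z _ _ => hf z)

/-- **Von Neumann's trace inequality.** -/
lemma vonNeumann {n₁ n₂ : ℕ} {A B : Matrix (Fin n₁) (Fin n₂) ℝ}
    {VA : Matrix (Fin n₁) (Fin n₁) ℝ} {a : Fin (min n₁ n₂) → ℝ}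
    {UA : Matrix (Fin n₂) (Fin n₂) ℝ}
    {VB : Matrix (Fin n₁) (Fin n₁) ℝ} {b : Fin (min n₁ n₂) → ℝ}
    {UB : Matrix (Fin n₂) (Fin n₂) ℝ}
    (hA : IsSVD A VA a UA) (hB : IsSVD B VB b UB)
    (σ τ : Equiv.Perm (Fin (min n₁ n₂)))
    (hσ : Antitone (a ∘ σ)) (hτ : Antitone (b ∘ τ)) :
    ip A B ≤ ∑ k, a (σ k) * b (τ k) := by
  obtain ⟨hVAt, hVAVt, hUAt, hUAUt, ha0, hAeq⟩ := hA
  obtain ⟨hVBt, hVBVt, hUBt, hUBUt, hb0, hBeq⟩ := hB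
  set P : Matrix (Fin n₁) (Fin n₁) ℝ := VAᵀ * VB with hP
  set R : Matrix (Fin n₂) (Fin n₂) ℝ := UBᵀ * UA with hR
  have hPPt : P * Pᵀ = 1 := by
    rw [hP, Matrix.transpose_mul, Matrix.transpose_transpose]
    rw [show VAᵀ * VB * (VBᵀ * VA) = VAᵀ * (VB * VBᵀ) * VA by simp only [Matrix.mul_assoc]]
    rw [hVBVt, Matrix.mul_one, hVAt]
  have hPtP : Pᵀ * P = 1 := by
    rw [hP, Matrix.transpose_mul, Matrix.transpose_transpose]
    rw [show VBᵀ * VA * (VAᵀ * VB) = VBᵀ * (VA * VAᵀ) * VB by simp only [Matrix.mul_assoc]]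
    rw [hVAVt, Matrix.mul_one, hVBt]
  have hRRt : R * Rᵀ = 1 := by
    rw [hR, Matrix.transpose_mul, Matrix.transpose_transpose]
    rw [show UBᵀ * UA * (UAᵀ * UB) = UBᵀ * (UA * UAᵀ) * UB by simp only [Matrix.mul_assoc]]
    rw [hUAUt, Matrix.mul_one, hUBt]
  have hRtR : Rᵀ * R = 1 := by
    rw [hR, Matrix.transpose_mul, Matrix.transpose_transpose]
    rw [show UAᵀ * UB * (UBᵀ * UA) = UAᵀ * (UB * UBᵀ) * UA by simp only [Matrix.mul_assoc]]
    rw [hUBUt, Matrix.mul_one, hUAt]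
  have step1 : ip A B = ∑ k, ∑ l, a k * b l * (P (c1 k) (c1 l) * R (c2 l) (c2 k)) := by
    rw [hAeq, ip_conj_left, ip_eq_sum]; refine (sum_rectDiag_mul a (VAᵀ * B * UA)).trans ?_
    refine Finset.sum_congr rfl fun k _ => ?_
    have : VAᵀ * B * UA = P * rectDiag b * R := by
      rw [hBeq, hP, hR]
      simp only [Matrix.mul_assoc]
    rw [this, mul_rectDiag_mul_apply, Finset.mul_sum]
    exact Finset.sum_congr rfl fun l _ => by ring
  rw [step1]
  set C : Fin (min n₁ n₂) → Fin (min n₁ n₂) → ℝ :=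
    fun k l => (P (c1 k) (c1 l) ^ 2 + R (c2 l) (c2 k) ^ 2) / 2 with hC
  have hstep2 : ∑ k, ∑ l, a k * b l * (P (c1 k) (c1 l) * R (c2 l) (c2 k))
      ≤ ∑ k, ∑ l, a k * b l * C k l := by
    refine Finset.sum_le_sum fun k _ => Finset.sum_le_sum fun l _ => ?_
    refine mul_le_mul_of_nonneg_left ?_ (mul_nonneg (ha0 k) (hb0 l))
    have := two_mul_le_add_sq (P (c1 k) (c1 l)) (R (c2 l) (c2 k))
    simp only [hC]
    nlinarith [this]
  have hC0 : ∀ k l, 0 ≤ C k l := by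
    intro k l; simp only [hC]; positivity
  have hProw : ∀ u : Fin n₁, ∑ z, P u z ^ 2 = 1 := by
    intro u
    have : (P * Pᵀ) u u = 1 := by rw [hPPt]; exact Matrix.one_apply_eq u
    rw [← this, Matrix.mul_apply]
    exact Finset.sum_congr rfl fun z _ => by rw [Matrix.transpose_apply, sq]
  have hPcol : ∀ u : Fin n₁, ∑ z, P z u ^ 2 = 1 := by
    intro u
    have : (Pᵀ * P) u u = 1 := by rw [hPtP]; exact Matrix.one_apply_eq u
    rw [← this, Matrix.mul_apply]
    exact Finset.sum_congr rfl fun z _ => by rw [Matrix.transpose_apply, sq]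
  have hRrow : ∀ u : Fin n₂, ∑ z, R u z ^ 2 = 1 := by
    intro u
    have : (R * Rᵀ) u u = 1 := by rw [hRRt]; exact Matrix.one_apply_eq u
    rw [← this, Matrix.mul_apply]
    exact Finset.sum_congr rfl fun z _ => by rw [Matrix.transpose_apply, sq]
  have hRcol : ∀ u : Fin n₂, ∑ z, R z u ^ 2 = 1 := by
    intro u
    have : (Rᵀ * R) u u = 1 := by rw [hRtR]; exact Matrix.one_apply_eq u
    rw [← this, Matrix.mul_apply]
    exact Finset.sum_congr rfl fun z _ => by rw [Matrix.transpose_apply, sq]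
  have hrow : ∀ k, ∑ l, C k l ≤ 1 := by
    intro k
    simp only [hC]
    have h1 : ∑ l : Fin (min n₁ n₂), P (c1 k) (c1 l) ^ 2 ≤ 1 := by
      rw [← hProw (c1 k)]
      exact sum_c1_le (fun z => P (c1 k) z ^ 2) (fun z => sq_nonneg _)
    have h2 : ∑ l : Fin (min n₁ n₂), R (c2 l) (c2 k) ^ 2 ≤ 1 := by
      rw [← hRcol (c2 k)]
      exact sum_c2_le (fun z => R z (c2 k) ^ 2) (fun z => sq_nonneg _)
    calc ∑ l : Fin (min n₁ n₂), (P (c1 k) (c1 l) ^ 2 + R (c2 l) (c2 k) ^ 2) / 2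
        = ((∑ l, P (c1 k) (c1 l) ^ 2) + ∑ l, R (c2 l) (c2 k) ^ 2) / 2 := by
          rw [← Finset.sum_add_distrib, Finset.sum_div]
      _ ≤ (1 + 1) / 2 := by linarith
      _ = 1 := by norm_num
  have hcol : ∀ l, ∑ k, C k l ≤ 1 := by
    intro l
    simp only [hC]
    have h1 : ∑ k : Fin (min n₁ n₂), P (c1 k) (c1 l) ^ 2 ≤ 1 := by
      rw [← hPcol (c1 l)]
      exact sum_c1_le (fun z => P z (c1 l) ^ 2) (fun z => sq_nonneg _)
    have h2 : ∑ k : Fin (min n₁ n₂), R (c2 l) (c2 k) ^ 2 ≤ 1 := by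
      rw [← hRrow (c2 l)]
      exact sum_c2_le (fun z => R (c2 l) z ^ 2) (fun z => sq_nonneg _)
    calc ∑ k : Fin (min n₁ n₂), (P (c1 k) (c1 l) ^ 2 + R (c2 l) (c2 k) ^ 2) / 2
        = ((∑ k, P (c1 k) (c1 l) ^ 2) + ∑ k, R (c2 l) (c2 k) ^ 2) / 2 := by
          rw [← Finset.sum_add_distrib, Finset.sum_div]
      _ ≤ (1 + 1) / 2 := by linarith
      _ = 1 := by norm_num
  have hreindex : ∑ k, ∑ l, a k * b l * C k l
      = ∑ k, ∑ l, (a ∘ σ) k * (b ∘ τ) l * C (σ k) (τ l) := by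
    rw [← Equiv.sum_comp σ (fun k => ∑ l, a k * b l * C k l)]
    refine Finset.sum_congr rfl fun k _ => ?_
    rw [← Equiv.sum_comp τ (fun l => a (σ k) * b l * C (σ k) l)]
    rfl
  calc ∑ k, ∑ l, a k * b l * (P (c1 k) (c1 l) * R (c2 l) (c2 k))
      ≤ ∑ k, ∑ l, a k * b l * C k l := hstep2
    _ = ∑ k, ∑ l, (a ∘ σ) k * (b ∘ τ) l * C (σ k) (τ l) := hreindex
    _ ≤ ∑ k, (a ∘ σ) k * (b ∘ τ) k := by
        refine substochastic_bound_fin (a ∘ σ) (b ∘ τ) hσ hτ (fun i => ha0 _) (fun i => hb0 _)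
          (fun k l => C (σ k) (τ l)) (fun k l => hC0 _ _) ?_ ?_
        · intro k
          rw [Equiv.sum_comp τ (fun l => C (σ k) l)]
          exact hrow _
        · intro l
          rw [Equiv.sum_comp σ (fun k => C k (τ l))]
          exact hcol _
    _ = ∑ k, a (σ k) * b (τ k) := rfl

set_option maxHeartbeats 1600000 in
/-- Every real rectangular matrix admits a (full) SVD. -/
lemma exists_isSVD {n₁ n₂ : ℕ} (Z : Matrix (Fin n₁) (Fin n₂) ℝ) :
    ∃ V s U, IsSVD Z V s U := by
  classical
  set G : Matrix (Fin n₂) (Fin n₂) ℝ := Zᵀ * Z with hGdef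
  have hpsd : G.PosSemidef := by
    have := Matrix.posSemidef_conjTranspose_mul_self Z
    rwa [Matrix.conjTranspose_eq_transpose_of_trivial] at this
  have hG : G.IsHermitian := hpsd.1
  set d : Fin n₂ → ℝ := hG.eigenvalues with hd
  have hd0 : ∀ i, 0 ≤ d i := fun i => hpsd.eigenvalues_nonneg i
  set U₀ : Matrix (Fin n₂) (Fin n₂) ℝ := (hG.eigenvectorUnitary : Matrix (Fin n₂) (Fin n₂) ℝ)
    with hU₀def
  have hU₀mem := hG.eigenvectorUnitary.2
  rw [Unitary.mem_iff] at hU₀mem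
  have hstar : star U₀ = U₀ᵀ := by
    rw [Matrix.star_eq_conjTranspose, Matrix.conjTranspose_eq_transpose_of_trivial]
  have hU₀tU₀ : U₀ᵀ * U₀ = 1 := by rw [← hstar]; exact hU₀mem.1
  have hU₀U₀t : U₀ * U₀ᵀ = 1 := by rw [← hstar]; exact hU₀mem.2
  have hofreal : (RCLike.ofReal ∘ hG.eigenvalues : Fin n₂ → ℝ) = d := by
    funext i
    simp [hd]
  have hspec : U₀ᵀ * G * U₀ = Matrix.diagonal d := by
    have h := hG.conjStarAlgAut_star_eigenvectorUnitary
    rw [Unitary.conjStarAlgAut_star_apply, ← hU₀def, hstar, hofreal] at h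
    exact h
  -- sort the eigenvalues in decreasing order
  set σ : Equiv.Perm (Fin n₂) := (Fin.revPerm).trans (Tuple.sort d) with hσdef
  set d' : Fin n₂ → ℝ := fun j => d (σ j) with hd'
  have hanti : Antitone d' := by
    intro i j hij
    exact Tuple.monotone_sort d (Fin.rev_le_rev.2 hij)
  have hd'0 : ∀ j, 0 ≤ d' j := fun j => hd0 _
  set U : Matrix (Fin n₂) (Fin n₂) ℝ := Matrix.of (fun i j => U₀ i (σ j)) with hUdef
  have hUtU : Uᵀ * U = 1 := by
    ext i j
    have entry : (Uᵀ * U) i j = (U₀ᵀ * U₀) (σ i) (σ j) := by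
      rw [Matrix.mul_apply, Matrix.mul_apply]
      exact Finset.sum_congr rfl fun x _ => rfl
    rw [entry, hU₀tU₀]
    by_cases h : i = j
    · subst h; simp [Matrix.one_apply]
    · have hne : σ i ≠ σ j := fun hc => h (σ.injective hc)
      simp [Matrix.one_apply, h, hne]
  have hUUt : U * Uᵀ = 1 := by
    ext i j
    have entry : (U * Uᵀ) i j = ∑ x, U₀ i (σ x) * U₀ j (σ x) := by
      rw [Matrix.mul_apply]
      exact Finset.sum_congr rfl fun x _ => rfl
    rw [entry, Equiv.sum_comp σ (fun y => U₀ i y * U₀ j y)]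
    have : (U₀ * U₀ᵀ) i j = ∑ y, U₀ i y * U₀ j y := by
      rw [Matrix.mul_apply]
      exact Finset.sum_congr rfl fun y _ => rfl
    rw [← this, hU₀U₀t]
  have hdiag : ∀ i j, (Uᵀ * G * U) i j = Matrix.diagonal d' i j := by
    intro i j
    have entry : (Uᵀ * G * U) i j = (U₀ᵀ * G * U₀) (σ i) (σ j) := by
      rw [Matrix.mul_apply, Matrix.mul_apply]
      refine Finset.sum_congr rfl fun y _ => ?_
      have h1 : (Uᵀ * G) i y = (U₀ᵀ * G) (σ i) y := by
        rw [Matrix.mul_apply, Matrix.mul_apply]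
        exact Finset.sum_congr rfl fun x _ => rfl
      rw [h1]
      rfl
    rw [entry, hspec]
    by_cases h : i = j
    · subst h; simp [Matrix.diagonal_apply_eq, hd']
    · have hne : σ i ≠ σ j := fun hc => h (σ.injective hc)
      rw [Matrix.diagonal_apply_ne _ hne, Matrix.diagonal_apply_ne _ h]
  have colinner : ∀ j j' : Fin n₂,
      ∑ x, (Z * U) x j * (Z * U) x j' = Matrix.diagonal d' j j' := by
    intro j j'
    have h1 : ((Z * U)ᵀ * (Z * U)) j j' = (Uᵀ * G * U) j j' := by
      rw [hGdef]
      rw [show (Z * U)ᵀ * (Z * U) = Uᵀ * (Zᵀ * Z) * U by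
        rw [Matrix.transpose_mul]; simp only [Matrix.mul_assoc]]
    rw [← hdiag j j', ← h1, Matrix.mul_apply]
    exact Finset.sum_congr rfl fun x _ => by rw [Matrix.transpose_apply]
  -- the rank bound
  set r : ℕ := (Finset.univ.filter (fun j : Fin n₂ => d' j ≠ 0)).card with hrdef
  have hsupp : ∀ j : Fin n₂, ((j : ℕ) < r ↔ d' j ≠ 0) := by
    intro j
    constructor
    · intro hjr hz
      have hsub : (Finset.univ.filter (fun i : Fin n₂ => d' i ≠ 0)) ⊆ Finset.Iio j := by
        intro i hi
        rw [Finset.mem_filter] at hi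
        rw [Finset.mem_Iio]
        by_contra hlt
        push_neg at hlt
        have : d' i ≤ d' j := hanti hlt
        have : d' i = 0 := le_antisymm (hz ▸ this) (hd'0 i)
        exact hi.2 this
      have := Finset.card_le_card hsub
      rw [Fin.card_Iio] at this
      omega
    · intro hne
      have hsub : Finset.Iic j ⊆ (Finset.univ.filter (fun i : Fin n₂ => d' i ≠ 0)) := by
        intro i hi
        rw [Finset.mem_Iic] at hi
        rw [Finset.mem_filter]
        refine ⟨Finset.mem_univ _, ?_⟩
        have h1 : d' j ≤ d' i := hanti hi
        have h2 : 0 < d' j := lt_of_le_of_ne (hd'0 j) (Ne.symm hne)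
        exact ne_of_gt (lt_of_lt_of_le h2 h1)
      have := Finset.card_le_card hsub
      rw [Fin.card_Iic] at this
      omega
  have hrn₂ : r ≤ n₂ := by
    have := Finset.card_filter_le Finset.univ (fun j : Fin n₂ => d' j ≠ 0)
    rwa [Finset.card_univ, Fintype.card_fin] at this
  have hrn₁ : r ≤ n₁ := by
    set w : {j : Fin n₂ // d' j ≠ 0} → EuclideanSpace ℝ (Fin n₁) :=
      fun j => (Real.sqrt (d' j.1))⁻¹ • WithLp.toLp 2 (fun x => (Z * U) x j.1) with hw
    have horth : Orthonormal ℝ w := by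
      rw [orthonormal_iff_ite]
      intro i j
      have hinner : (inner ℝ (w i) (w j) : ℝ) = (Real.sqrt (d' i.1))⁻¹ * ((Real.sqrt (d' j.1))⁻¹ *
          ∑ x, (Z * U) x i.1 * (Z * U) x j.1) := by
        simp only [hw]
        rw [real_inner_smul_left, real_inner_smul_right, PiLp.inner_apply]
        simp [RCLike.inner_apply, starRingEnd_apply, mul_comm]
      rw [hinner, colinner]
      by_cases h : i = j
      · subst h
        rw [if_pos rfl, Matrix.diagonal_apply_eq]
        have hpos : 0 < d' i.1 := lt_of_le_of_ne (hd'0 i.1) (Ne.symm i.2)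
        have hs : Real.sqrt (d' i.1) * Real.sqrt (d' i.1) = d' i.1 :=
          Real.mul_self_sqrt (hd'0 i.1)
        have hsne : Real.sqrt (d' i.1) ≠ 0 := ne_of_gt (Real.sqrt_pos.2 hpos)
        field_simp
        rw [Real.sq_sqrt (hd'0 _)]
      · have hne : i.1 ≠ j.1 := fun hc => h (Subtype.ext hc)
        rw [if_neg h, Matrix.diagonal_apply_ne _ hne]
        ring
    have hli := horth.linearIndependent
    have hcard := hli.fintype_card_le_finrank
    rw [finrank_euclideanSpace_fin] at hcard
    rw [hrdef]
    calc (Finset.univ.filter (fun j : Fin n₂ => d' j ≠ 0)).card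
        = Fintype.card {j : Fin n₂ // d' j ≠ 0} := (Fintype.card_subtype _).symm
      _ ≤ n₁ := hcard
  have hrm : r ≤ min n₁ n₂ := le_min hrn₁ hrn₂
  -- build the left singular vectors
  set v : Fin n₁ → EuclideanSpace ℝ (Fin n₁) := fun i =>
    if h : (i : ℕ) < r then
      (Real.sqrt (d' ⟨(i : ℕ), lt_of_lt_of_le h hrn₂⟩))⁻¹ •
        WithLp.toLp 2 (fun x => (Z * U) x ⟨(i : ℕ), lt_of_lt_of_le h hrn₂⟩)
    else 0 with hv
  have horthv : Orthonormal ℝ (Set.restrict {i : Fin n₁ | (i : ℕ) < r} v) := by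
    rw [orthonormal_iff_ite]
    rintro ⟨i, hi⟩ ⟨j, hj⟩
    change (inner ℝ (v i) (v j) : ℝ) = _
    have hi' : (i : ℕ) < r := hi
    have hj' : (j : ℕ) < r := hj
    set i₂ : Fin n₂ := ⟨(i : ℕ), lt_of_lt_of_le hi' hrn₂⟩ with hi₂
    set j₂ : Fin n₂ := ⟨(j : ℕ), lt_of_lt_of_le hj' hrn₂⟩ with hj₂
    have hvi : v i = (Real.sqrt (d' i₂))⁻¹ • WithLp.toLp 2 (fun x => (Z * U) x i₂) := by
      simp only [hv]; rw [dif_pos hi']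
    have hvj : v j = (Real.sqrt (d' j₂))⁻¹ • WithLp.toLp 2 (fun x => (Z * U) x j₂) := by
      simp only [hv]; rw [dif_pos hj']
    have hinner : (inner ℝ (v i) (v j) : ℝ) = (Real.sqrt (d' i₂))⁻¹ * ((Real.sqrt (d' j₂))⁻¹ *
        ∑ x, (Z * U) x i₂ * (Z * U) x j₂) := by
      rw [hvi, hvj, real_inner_smul_left, real_inner_smul_right, PiLp.inner_apply]
      simp [RCLike.inner_apply, starRingEnd_apply, mul_comm]
    rw [hinner, colinner]
    by_cases h : i = j
    · subst h
      rw [if_pos rfl]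
      have h22 : i₂ = j₂ := rfl
      rw [← h22, Matrix.diagonal_apply_eq]
      have hdne : d' i₂ ≠ 0 := (hsupp i₂).1 hi'
      have hpos : 0 < d' i₂ := lt_of_le_of_ne (hd'0 i₂) (Ne.symm hdne)
      have hs : Real.sqrt (d' i₂) * Real.sqrt (d' i₂) = d' i₂ := Real.mul_self_sqrt (hd'0 i₂)
      have hsne : Real.sqrt (d' i₂) ≠ 0 := ne_of_gt (Real.sqrt_pos.2 hpos)
      field_simp
      rw [Real.sq_sqrt (hd'0 _)]
    · have hne2 : i₂ ≠ j₂ := by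
        intro hc
        have h2 := congrArg Fin.val hc
        exact h (Fin.ext h2)
      have hneS : (⟨i, hi⟩ : {i : Fin n₁ | (i : ℕ) < r}) ≠ ⟨j, hj⟩ := by
        intro hc; exact h (Subtype.ext_iff.1 hc)
      rw [if_neg hneS, Matrix.diagonal_apply_ne _ hne2]
      ring
  obtain ⟨b, hb⟩ := horthv.exists_orthonormalBasis_extension_of_card_eq
    (by rw [finrank_euclideanSpace_fin, Fintype.card_fin])
  set V : Matrix (Fin n₁) (Fin n₁) ℝ := Matrix.of (fun x i => b i x) with hV
  have hVtV : Vᵀ * V = 1 := by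
    ext i j
    have : (Vᵀ * V) i j = ∑ x, b i x * b j x := by
      rw [Matrix.mul_apply]
      exact Finset.sum_congr rfl fun x _ => rfl
    rw [this]
    have horthb := orthonormal_iff_ite.1 b.orthonormal i j
    have hib : (inner ℝ (b i) (b j) : ℝ) = ∑ x, b i x * b j x := by
      rw [PiLp.inner_apply]
      exact Finset.sum_congr rfl fun x _ => by
        simp [RCLike.inner_apply, starRingEnd_apply, mul_comm]
    rw [← hib, horthb, Matrix.one_apply]
  have hVVt : V * Vᵀ = 1 := mul_eq_one_comm.mp hVtV
  set sval : Fin (min n₁ n₂) → ℝ := fun k => Real.sqrt (d' (c2 k)) with hsval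
  have key : V * rectDiag sval = Z * U := by
    ext x j
    have hLHS : (V * rectDiag sval) x j
        = (if h : (j : ℕ) < min n₁ n₂ then
            sval ⟨(j : ℕ), h⟩ * V x ⟨(j : ℕ), lt_of_lt_of_le h (min_le_left _ _)⟩ else 0) := by
      rw [Matrix.mul_apply]
      exact sum_mul_rectDiag_fixed V x sval j
    rw [hLHS]
    by_cases hjr : (j : ℕ) < r
    · have hjm : (j : ℕ) < min n₁ n₂ := lt_of_lt_of_le hjr hrm
      rw [dif_pos hjm]
      set i₁ : Fin n₁ := ⟨(j : ℕ), lt_of_lt_of_le hjm (min_le_left _ _)⟩ with hi₁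
      have hmem : i₁ ∈ {i : Fin n₁ | (i : ℕ) < r} := hjr
      have hbi : b i₁ = v i₁ := hb i₁ hmem
      have hj₂ : (⟨(i₁ : ℕ), lt_of_lt_of_le hjr hrn₂⟩ : Fin n₂) = j := Fin.ext rfl
      have hvi : v i₁ = (Real.sqrt (d' j))⁻¹ • WithLp.toLp 2 (fun x => (Z * U) x j) := by
        simp only [hv]
        rw [dif_pos (show ((i₁ : ℕ) : ℕ) < r from hjr)]
      have hVxi : V x i₁ = (Real.sqrt (d' j))⁻¹ * (Z * U) x j := by
        have : V x i₁ = b i₁ x := rfl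
        rw [this, hbi, hvi]
        rfl
      have hc2j : c2 (⟨(j : ℕ), hjm⟩ : Fin (min n₁ n₂)) = j := Fin.ext rfl
      have hsv : sval ⟨(j : ℕ), hjm⟩ = Real.sqrt (d' j) := by
        simp only [hsval]
        rw [hc2j]
      rw [hVxi, hsv]
      have hdne : d' j ≠ 0 := (hsupp j).1 hjr
      have hpos : 0 < d' j := lt_of_le_of_ne (hd'0 j) (Ne.symm hdne)
      have hsne : Real.sqrt (d' j) ≠ 0 := ne_of_gt (Real.sqrt_pos.2 hpos)
      field_simp
    · have hdz : d' j = 0 := by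
        by_contra hne
        exact hjr ((hsupp j).2 hne)
      have hcolz : ∀ x, (Z * U) x j = 0 := by
        have hsum : ∑ x, (Z * U) x j * (Z * U) x j = 0 := by
          rw [colinner j j, Matrix.diagonal_apply_eq, hdz]
        intro x
        have := (Finset.sum_eq_zero_iff_of_nonneg
          (fun x _ => mul_self_nonneg ((Z * U) x j))).1 hsum x (Finset.mem_univ x)
        exact mul_self_eq_zero.1 this
      rw [hcolz x]
      by_cases hjm : (j : ℕ) < min n₁ n₂
      · rw [dif_pos hjm]
        have : sval ⟨(j : ℕ), hjm⟩ = 0 := by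
          rw [hsval]
          have : d' (c2 ⟨(j : ℕ), hjm⟩) = 0 := by
            rw [show c2 (⟨(j : ℕ), hjm⟩ : Fin (min n₁ n₂)) = j from Fin.ext rfl, hdz]
          simp only [this, Real.sqrt_zero]
        rw [this, zero_mul]
      · rw [dif_neg hjm]
  have final : Z = V * rectDiag sval * Uᵀ := by
    calc Z = Z * 1 := (Matrix.mul_one Z).symm
      _ = Z * (U * Uᵀ) := by rw [hUUt]
      _ = (Z * U) * Uᵀ := by rw [Matrix.mul_assoc]
      _ = V * rectDiag sval * Uᵀ := by rw [← key]
  exact ⟨V, sval, U, hVtV, hVVt, hUtU, hUUt, fun k => Real.sqrt_nonneg _, final⟩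

lemma ip_sub_expand {n₁ n₂ : ℕ} (A B : Matrix (Fin n₁) (Fin n₂) ℝ) :
    ip (A - B) (A - B) = ip A A - 2 * ip A B + ip B B := by
  rw [ip_sub_left, ip_sub_right, ip_sub_right, ip_comm B A]
  ring

/-- Absorb signs of the diagonal vector into the left orthogonal factor. -/
lemma isSVD_abs {n₁ n₂ : ℕ} {X : Matrix (Fin n₁) (Fin n₂) ℝ}
    {V : Matrix (Fin n₁) (Fin n₁) ℝ} {U : Matrix (Fin n₂) (Fin n₂) ℝ}
    (hVt : Vᵀ * V = 1) (hVVt : V * Vᵀ = 1) (hUt : Uᵀ * U = 1) (hUUt : U * Uᵀ = 1)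
    (d : Fin (min n₁ n₂) → ℝ) (hX : X = V * rectDiag d * Uᵀ) :
    ∃ V', IsSVD X V' (fun k => |d k|) U := by
  classical
  set e : Fin n₁ → ℝ := fun i =>
    if h : (i : ℕ) < min n₁ n₂ then (if d ⟨(i : ℕ), h⟩ < 0 then -1 else 1) else 1 with he
  set E : Matrix (Fin n₁) (Fin n₁) ℝ := Matrix.diagonal e with hE
  have hee : ∀ i, e i * e i = 1 := by
    intro i; simp only [he]; split_ifs <;> norm_num
  have hEE : E * E = 1 := by
    rw [hE, Matrix.diagonal_mul_diagonal]
    rw [show (fun i => e i * e i) = fun _ => (1 : ℝ) from funext hee]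
    exact Matrix.diagonal_one
  have hEt : Eᵀ = E := by rw [hE, Matrix.diagonal_transpose]
  refine ⟨V * E, ?_, ?_, hUt, hUUt, fun k => abs_nonneg _, ?_⟩
  · rw [Matrix.transpose_mul, hEt]
    rw [show E * Vᵀ * (V * E) = E * (Vᵀ * V) * E by simp only [Matrix.mul_assoc]]
    rw [hVt, Matrix.mul_one, hEE]
  · rw [Matrix.transpose_mul, hEt]
    rw [show V * E * (E * Vᵀ) = V * (E * E) * Vᵀ by simp only [Matrix.mul_assoc]]
    rw [hEE, Matrix.mul_one, hVVt]
  · rw [hX]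
    have hkey : E * rectDiag (fun k => |d k|) = rectDiag d := by
      ext i j
      rw [hE, Matrix.diagonal_mul]
      rw [rectDiag_apply, rectDiag_apply]
      by_cases h : (i : ℕ) = (j : ℕ) ∧ (i : ℕ) < min n₁ n₂
      · rw [dif_pos h, dif_pos h]
        simp only [he]
        rw [dif_pos h.2]
        split_ifs with hneg
        · rw [abs_of_neg hneg]; ring
        · rw [abs_of_nonneg (not_lt.1 hneg)]; ring
      · rw [dif_neg h, dif_neg h, mul_zero]
    rw [show V * E * rectDiag (fun k => |d k|) * Uᵀ
        = V * (E * rectDiag (fun k => |d k|)) * Uᵀ by simp only [Matrix.mul_assoc]]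
    rw [hkey]

end ProxAux

open ProxAux

/-- For a convex scalar-valued spectral function `J(X) = φ(Λ_X)` (with `φ` proper, lsc,
convex, symmetric and absolutely symmetric), the proximity operator satisfies
`Prox_{γJ}(X) = V_X diag(Prox_{γφ}(Λ_X)) U_Xᵀ` for any SVD `X = V_X diag(Λ_X) U_Xᵀ`:
the matrix `V * rectDiag p * Uᵀ`, with `p = Prox_{γφ}(Λ)`, is the unique minimizer of
`Z ↦ (1/2)‖X − Z‖_F² + γ J(Z)`. -/
theorem prox_spectral_function {n₁ n₂ : ℕ}
    (φ : (Fin (min n₁ n₂) → ℝ) → EReal)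
    (hproper_top : ∃ Λ, φ Λ ≠ ⊤) (hproper_bot : ∀ Λ, φ Λ ≠ ⊥)
    (hlsc : LowerSemicontinuous φ) (hconv : ERealConvex φ)
    (hsym : ∀ (σ : Equiv.Perm (Fin (min n₁ n₂))) (Λ : Fin (min n₁ n₂) → ℝ),
      φ (fun i => Λ (σ i)) = φ Λ)
    (habs : ∀ Λ : Fin (min n₁ n₂) → ℝ, φ (fun i => |Λ i|) = φ Λ)
    (J : Matrix (Fin n₁) (Fin n₂) ℝ → EReal)
    (hJ : ∀ X V Λ U, IsSVD X V Λ U → J X = φ Λ)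
    (γ : ℝ) (hγ : 0 < γ)
    (X : Matrix (Fin n₁) (Fin n₂) ℝ)
    (V : Matrix (Fin n₁) (Fin n₁) ℝ) (Λ : Fin (min n₁ n₂) → ℝ)
    (U : Matrix (Fin n₂) (Fin n₂) ℝ) (hSVD : IsSVD X V Λ U)
    (p : Fin (min n₁ n₂) → ℝ)
    (hp : ∀ z, proxObjVec γ φ Λ p ≤ proxObjVec γ φ Λ z) :
    (∀ Z, proxObjMat γ J X (V * rectDiag p * Uᵀ) ≤ proxObjMat γ J X Z) ∧
      (∀ Z, (∀ W, proxObjMat γ J X Z ≤ proxObjMat γ J X W) →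
        Z = V * rectDiag p * Uᵀ) := by
  classical
  obtain ⟨hVt, hVVt, hUt, hUUt, hΛ0, hXeq⟩ := hSVD
  set Y : Matrix (Fin n₁) (Fin n₂) ℝ := V * rectDiag p * Uᵀ with hY
  -- φ p is finite
  obtain ⟨Λ₀, hΛ₀⟩ := hproper_top
  obtain ⟨B₀, hB₀⟩ : ∃ B₀ : ℝ, φ Λ₀ = (B₀ : EReal) :=
    ⟨(φ Λ₀).toReal, (EReal.coe_toReal hΛ₀ (hproper_bot Λ₀)).symm⟩
  have hvec : ∀ (z : Fin (min n₁ n₂) → ℝ) (B : ℝ), φ z = (B : EReal) →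
      proxObjVec γ φ Λ z
        = ((1 / 2 * ∑ i, (Λ i - z i) ^ 2 + γ * B : ℝ) : EReal) := by
    intro z B hB
    unfold proxObjVec
    rw [hB, ← EReal.coe_mul, ← EReal.coe_add]
  have hφp_ne_top : φ p ≠ ⊤ := by
    intro htop
    have h1 := hp Λ₀
    rw [hvec Λ₀ B₀ hB₀] at h1
    unfold proxObjVec at h1
    rw [htop, EReal.coe_mul_top_of_pos hγ,
      EReal.add_top_of_ne_bot (EReal.coe_ne_bot _)] at h1
    exact absurd ((EReal.coe_lt_top _).trans_le h1) (lt_irrefl _)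
  obtain ⟨A, hA⟩ : ∃ A : ℝ, φ p = (A : EReal) :=
    ⟨(φ p).toReal, (EReal.coe_toReal hφp_ne_top (hproper_bot p)).symm⟩
  -- subgradient inequality for the vector problem
  have hsub : ∀ (w : Fin (min n₁ n₂) → ℝ) (B : ℝ), φ w = (B : EReal) →
      ∑ i, (Λ i - p i) * (w i - p i) ≤ γ * (B - A) := by
    intro w B hB
    set S : ℝ := ∑ i, (Λ i - p i) * (w i - p i) with hS
    set T : ℝ := ∑ i, (w i - p i) ^ 2 with hT
    have hT0 : 0 ≤ T := Finset.sum_nonneg fun i _ => sq_nonneg _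
    have key : ∀ t : ℝ, 0 < t → t ≤ 1 → S ≤ γ * (B - A) + t * T / 2 := by
      intro t ht ht1
      set z' : Fin (min n₁ n₂) → ℝ := fun i => p i + t * (w i - p i) with hz'
      have hz'2 : (1 - t) • p + t • w = z' := by
        funext i
        simp only [hz', Pi.add_apply, Pi.smul_apply, smul_eq_mul]
        ring
      have hcv := hconv p w (1 - t) t (by linarith) (le_of_lt ht) (by ring)
      rw [hz'2] at hcv
      have hφz'le : φ z' ≤ (((1 - t) * A + t * B : ℝ) : EReal) := by
        calc φ z' ≤ ((1 - t : ℝ) : EReal) * φ p + ((t : ℝ) : EReal) * φ w := hcv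
          _ = (((1 - t) * A + t * B : ℝ) : EReal) := by
              rw [hA, hB, ← EReal.coe_mul, ← EReal.coe_mul, ← EReal.coe_add]
      have hz'net : φ z' ≠ ⊤ := ne_top_of_le_ne_top (EReal.coe_ne_top _) hφz'le
      obtain ⟨C, hC⟩ : ∃ C : ℝ, φ z' = (C : EReal) :=
        ⟨(φ z').toReal, (EReal.coe_toReal hz'net (hproper_bot z')).symm⟩
      have hCle : C ≤ (1 - t) * A + t * B := by
        rw [hC] at hφz'le
        exact_mod_cast hφz'le
      have h1 := hp z'
      rw [hvec p A hA, hvec z' C hC] at h1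
      have h1' : 1 / 2 * ∑ i, (Λ i - p i) ^ 2 + γ * A
          ≤ 1 / 2 * ∑ i, (Λ i - z' i) ^ 2 + γ * C := by exact_mod_cast h1
      have hq : ∑ i, (Λ i - z' i) ^ 2
          = ∑ i, (Λ i - p i) ^ 2 - 2 * t * S + t ^ 2 * T := by
        have hterm : ∀ i, (Λ i - z' i) ^ 2
            = (Λ i - p i) ^ 2 - 2 * t * ((Λ i - p i) * (w i - p i))
              + t ^ 2 * (w i - p i) ^ 2 := by
          intro i
          simp only [hz']
          ring
        rw [Finset.sum_congr rfl fun i _ => hterm i]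
        rw [Finset.sum_add_distrib, Finset.sum_sub_distrib, ← Finset.mul_sum, ← Finset.mul_sum]
      rw [hq] at h1'
      have hγC : γ * C ≤ γ * ((1 - t) * A + t * B) :=
        mul_le_mul_of_nonneg_left hCle (le_of_lt hγ)
      have hexp : γ * ((1 - t) * A + t * B) = γ * A - t * γ * A + t * γ * B := by ring
      have h4 : t * S ≤ t ^ 2 * T / 2 + γ * C - γ * A := by linarith
      have h3 : t * S ≤ t * (γ * (B - A) + t * T / 2) := by nlinarith
      exact (mul_le_mul_iff_right₀ ht).mp h3
    by_contra hlt
    push_neg at hlt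
    rcases eq_or_lt_of_le hT0 with hTz | hTpos
    · have := key 1 one_pos le_rfl
      rw [← hTz] at this
      simp at this
      linarith
    · set t₀ : ℝ := min 1 ((S - γ * (B - A)) / T) with ht₀
      have hq1 : 0 < (S - γ * (B - A)) / T := div_pos (by linarith) hTpos
      have ht₀pos : 0 < t₀ := lt_min one_pos hq1
      have ht₀le : t₀ ≤ 1 := min_le_left _ _
      have := key t₀ ht₀pos ht₀le
      have ht₀T : t₀ * T ≤ S - γ * (B - A) := by
        have h5 : t₀ ≤ (S - γ * (B - A)) / T := min_le_right _ _
        calc t₀ * T ≤ ((S - γ * (B - A)) / T) * T :=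
              mul_le_mul_of_nonneg_right h5 hT0
          _ = S - γ * (B - A) := div_mul_cancel₀ _ (ne_of_gt hTpos)
      linarith
  -- facts about Y
  have hXY : X - Y = V * rectDiag (fun k => Λ k - p k) * Uᵀ := by
    rw [hXeq, hY, ← Matrix.sub_mul, ← Matrix.mul_sub, rectDiag_sub]
  obtain ⟨V', hSVDY⟩ := isSVD_abs hVt hVVt hUt hUUt p hY
  have hJY : J Y = (A : EReal) := by
    rw [hJ Y V' _ U hSVDY, habs p, hA]
  have hipXYY : ip (X - Y) Y = ∑ k, (Λ k - p k) * p k := by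
    rw [hXY, hY, ip_conj hVt hUt, ip_rectDiag]
  have hsq : ∀ M N : Matrix (Fin n₁) (Fin n₂) ℝ,
      ∑ i, ∑ j, (M i j - N i j) ^ 2 = ip (M - N) (M - N) := by
    intro M N
    rw [ip_eq_sum]
    refine Finset.sum_congr rfl fun i _ => Finset.sum_congr rfl fun j _ => ?_
    rw [Matrix.sub_apply, sq]
  have hPM : ∀ (Z : Matrix (Fin n₁) (Fin n₂) ℝ) (B : ℝ), J Z = (B : EReal) →
      proxObjMat γ J X Z
        = ((1 / 2 * (∑ i, ∑ j, (X i j - Z i j) ^ 2) + γ * B : ℝ) : EReal) := by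
    intro Z B hB
    unfold proxObjMat
    rw [hB, ← EReal.coe_mul, ← EReal.coe_add]
  have hPMY := hPM Y A hJY
  -- the master inequality
  have master : ∀ Z : Matrix (Fin n₁) (Fin n₂) ℝ,
      (proxObjMat γ J X Y ≤ proxObjMat γ J X Z) ∧
        (proxObjMat γ J X Z ≤ proxObjMat γ J X Y → Z = Y) := by
    intro Z
    obtain ⟨W, sv, Q, hZsvd⟩ := exists_isSVD Z
    have hsv0 : ∀ k, 0 ≤ sv k := hZsvd.2.2.2.2.1
    have hJZ : J Z = φ sv := hJ Z W sv Q hZsvd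
    obtain ⟨V'', hSVDXY⟩ := isSVD_abs hVt hVVt hUt hUUt (fun k => Λ k - p k) hXY
    obtain ⟨σ, hσ⟩ := exists_antitone_perm (fun k => |Λ k - p k|)
    obtain ⟨τ, hτ⟩ := exists_antitone_perm sv
    have hvN : ip (X - Y) Z ≤ ∑ k, |Λ (σ k) - p (σ k)| * sv (τ k) := by
      have := vonNeumann hSVDXY hZsvd σ τ hσ hτ
      exact this
    set w : Fin (min n₁ n₂) → ℝ :=
      fun i => (if Λ i - p i < 0 then (-1 : ℝ) else 1) * sv (τ (σ⁻¹ i)) with hw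
    have hwabs : (fun i => |w i|) = fun i => sv (τ (σ⁻¹ i)) := by
      funext i
      simp only [hw]
      rw [abs_mul]
      split_ifs <;> simp [abs_of_nonneg (hsv0 _)]
    have hφw : φ w = φ sv := by
      rw [← habs w, hwabs]
      exact hsym ((σ⁻¹ : Equiv.Perm (Fin (min n₁ n₂))).trans τ) sv
    have hsum_w : ∑ i, (Λ i - p i) * w i = ∑ k, |Λ (σ k) - p (σ k)| * sv (τ k) := by
      have h1 : ∀ i, (Λ i - p i) * w i = |Λ i - p i| * sv (τ (σ⁻¹ i)) := by
        intro i
        simp only [hw]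
        split_ifs with h
        · rw [abs_of_neg h]; ring
        · rw [abs_of_nonneg (not_lt.1 h)]; ring
      rw [Finset.sum_congr rfl fun i _ => h1 i]
      rw [← Equiv.sum_comp σ (fun i => |Λ i - p i| * sv (τ (σ⁻¹ i)))]
      refine Finset.sum_congr rfl fun k _ => ?_
      simp [Equiv.Perm.inv_def]
    by_cases hφsv : φ sv = ⊤
    · have hZtop : proxObjMat γ J X Z = ⊤ := by
        unfold proxObjMat
        rw [hJZ, hφsv, EReal.coe_mul_top_of_pos hγ,
          EReal.add_top_of_ne_bot (EReal.coe_ne_bot _)]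
      constructor
      · rw [hZtop]; exact le_top
      · intro hle
        rw [hZtop, hPMY] at hle
        exact absurd ((EReal.coe_lt_top _).trans_le hle) (lt_irrefl _)
    · obtain ⟨B, hB⟩ : ∃ B : ℝ, φ sv = (B : EReal) :=
        ⟨(φ sv).toReal, (EReal.coe_toReal hφsv (hproper_bot sv)).symm⟩
      have hsubB := hsub w B (hφw.trans hB)
      have hPMZ := hPM Z B (hJZ.trans hB)
      -- real-number bookkeeping
      have hZY : X - Z = (X - Y) - (Z - Y) := by abel
      have hQZ : ∑ i, ∑ j, (X i j - Z i j) ^ 2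
          = ip (X - Y) (X - Y) - 2 * ip (X - Y) (Z - Y) + ip (Z - Y) (Z - Y) := by
        rw [hsq X Z, hZY, ip_sub_expand]
      have hQY : ∑ i, ∑ j, (X i j - Y i j) ^ 2 = ip (X - Y) (X - Y) := by
        rw [hsq X Y]
      have hipZ : ip (X - Y) (Z - Y) = ip (X - Y) Z - ∑ k, (Λ k - p k) * p k := by
        rw [ip_sub_right, hipXYY]
      have hsplit : ∑ i, (Λ i - p i) * (w i - p i)
          = ∑ i, (Λ i - p i) * w i - ∑ k, (Λ k - p k) * p k := by
        rw [← Finset.sum_sub_distrib]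
        exact Finset.sum_congr rfl fun i _ => by ring
      have hvN' : ip (X - Y) Z ≤ ∑ i, (Λ i - p i) * w i := by
        rw [hsum_w]; exact hvN
      have hchain : ip (X - Y) (Z - Y) ≤ γ * (B - A) := by
        rw [hipZ]
        linarith [hvN', hsubB, hsplit]
      have hplus : 1 / 2 * (∑ i, ∑ j, (X i j - Y i j) ^ 2) + γ * A
            + 1 / 2 * ip (Z - Y) (Z - Y)
          ≤ 1 / 2 * (∑ i, ∑ j, (X i j - Z i j) ^ 2) + γ * B := by
        rw [hQZ, hQY]
        linarith
      have hip0 : 0 ≤ ip (Z - Y) (Z - Y) := ip_self_nonneg _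
      constructor
      · rw [hPMY, hPMZ, EReal.coe_le_coe_iff]
        linarith
      · intro hle
        rw [hPMY, hPMZ, EReal.coe_le_coe_iff] at hle
        have hipz : ip (Z - Y) (Z - Y) ≤ 0 := by linarith
        have hip00 : ip (Z - Y) (Z - Y) = 0 := le_antisymm hipz hip0
        rw [ip_eq_sum] at hip00
        have hentry : ∀ i ∈ (Finset.univ : Finset (Fin n₁)),
            ∑ j, (Z - Y) i j * (Z - Y) i j = 0 := by
          intro i _
          have h0 := (Finset.sum_eq_zero_iff_of_nonneg
            (fun i _ => Finset.sum_nonneg fun j _ => mul_self_nonneg _)).1 hip00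
          exact h0 i (Finset.mem_univ i)
        ext i j
        have h1 := (Finset.sum_eq_zero_iff_of_nonneg
          (fun j _ => mul_self_nonneg ((Z - Y) i j))).1 (hentry i (Finset.mem_univ i))
          j (Finset.mem_univ j)
        have h2 : (Z - Y) i j = 0 := mul_self_eq_zero.1 h1
        rw [Matrix.sub_apply] at h2
        linarith
  exact ⟨fun Z => (master Z).1, fun Z hmin => (master Z).2 (hmin Y)⟩
end

section
/- For every γ > 0 and every X ∈ ℝ^{n₁×n₂} with SVD X = V_X diag(Λ_X) U_X^*, the proximity operator of γ times the nuclear norm ‖·‖_* is Prox_{γ‖·‖_*}(X) = V_X diag(T_γ(Λ_X)) U_X^*, where T_γ is componentwise soft-thresholding: T_γ(t)_i = max(0, 1 − γ/|t_i|) t_i. -/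
open Matrix

/-- Componentwise soft-thresholding `T_γ(t)_i = max(0, 1 − γ/|t_i|) t_i`. -/
noncomputable def softThresh {n : ℕ} (γ : ℝ) (t : Fin n → ℝ) : Fin n → ℝ :=
  fun i => max 0 (1 - γ / |t i|) * t i

section Aux
variable {n₁ n₂ : ℕ}

def emb1 (k : Fin (min n₁ n₂)) : Fin n₁ := ⟨k, lt_of_lt_of_le k.2 (min_le_left _ _)⟩
def emb2 (k : Fin (min n₁ n₂)) : Fin n₂ := ⟨k, lt_of_lt_of_le k.2 (min_le_right _ _)⟩

lemma rectDiag_emb (a : Fin (min n₁ n₂) → ℝ) (k : Fin (min n₁ n₂)) :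
    rectDiag a (emb1 k) (emb2 k) = a k := by
  show dite _ _ _ = _
  rw [dif_pos ⟨rfl, k.2⟩]
  exact congrArg a (Fin.eta _ _)

lemma rectDiag_eq_zero (a : Fin (min n₁ n₂) → ℝ) (i : Fin n₁) (j : Fin n₂)
    (h : ¬ ((i : ℕ) = (j : ℕ) ∧ (i : ℕ) < min n₁ n₂)) : rectDiag a i j = 0 := by
  show dite _ _ _ = _
  rw [dif_neg h]

/-- Key summation lemma. -/
lemma sum_rectDiag_mul (a : Fin (min n₁ n₂) → ℝ) (Z : Matrix (Fin n₁) (Fin n₂) ℝ) :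
    ∑ i, ∑ j, rectDiag a i j * Z i j = ∑ k, a k * Z (emb1 k) (emb2 k) := by
  have h1 : ∀ i : Fin n₁, ∑ j, rectDiag a i j * Z i j
      = if h : (i : ℕ) < min n₁ n₂ then
          a ⟨i, h⟩ * Z i ⟨i, lt_of_lt_of_le h (min_le_right _ _)⟩ else 0 := by
    intro i
    by_cases h : (i : ℕ) < min n₁ n₂
    · rw [dif_pos h]
      rw [Finset.sum_eq_single (⟨(i:ℕ), lt_of_lt_of_le h (min_le_right _ _)⟩ : Fin n₂)]
      · congr 1
        show dite _ _ _ = _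
        rw [dif_pos ⟨rfl, h⟩]
      · intro j _ hj
        rw [rectDiag_eq_zero, zero_mul]
        rintro ⟨h1, -⟩
        exact hj (by ext; exact h1.symm)
      · intro hmem; exact absurd (Finset.mem_univ _) hmem
    · rw [dif_neg h]
      apply Finset.sum_eq_zero
      intro j _
      rw [rectDiag_eq_zero, zero_mul]
      rintro ⟨-, h2⟩; exact h h2
  rw [Finset.sum_congr rfl (fun i _ => h1 i)]
  have key : ∀ n (hn : min n₁ n₂ ≤ n)
      (f : ∀ x : ℕ, x < min n₁ n₂ → ℝ),
      (∑ i : Fin n, if h : (i : ℕ) < min n₁ n₂ then f i h else 0)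
        = ∑ k : Fin (min n₁ n₂), f k k.2 := by
    intro n hn f
    have h2 : ∑ k : Fin (min n₁ n₂), f k k.2
        = ∑ i ∈ Finset.range (min n₁ n₂), if h : i < min n₁ n₂ then f i h else 0 := by
      rw [← Fin.sum_univ_eq_sum_range (fun i => if h : i < min n₁ n₂ then f i h else 0)]
      exact Finset.sum_congr rfl fun k _ => (dif_pos k.2).symm
    rw [Fin.sum_univ_eq_sum_range (fun i => if h : i < min n₁ n₂ then f i h else 0), h2]
    rw [← Finset.sum_subset (Finset.range_subset_range.2 hn)]
    intro x _ hx
    rw [Finset.mem_range] at hx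
    rw [dif_neg hx]
  exact key n₁ (min_le_left _ _) (fun x h => a ⟨x, h⟩ *
    Z ⟨x, lt_of_lt_of_le h (min_le_left _ _)⟩ ⟨x, lt_of_lt_of_le h (min_le_right _ _)⟩)
end Aux

section Frob
variable {n₁ n₂ : ℕ}

noncomputable def frob (A B : Matrix (Fin n₁) (Fin n₂) ℝ) : ℝ := ∑ i, ∑ j, A i j * B i j

lemma frob_eq_trace (A B : Matrix (Fin n₁) (Fin n₂) ℝ) : frob A B = trace (Aᵀ * B) := by
  rw [frob, trace, Finset.sum_comm]
  refine Finset.sum_congr rfl fun j _ => ?_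
  simp [Matrix.mul_apply, diag]

lemma frob_conj (V : Matrix (Fin n₁) (Fin n₁) ℝ) (U : Matrix (Fin n₂) (Fin n₂) ℝ)
    (W : Matrix (Fin n₁) (Fin n₁) ℝ) (Q : Matrix (Fin n₂) (Fin n₂) ℝ)
    (A B : Matrix (Fin n₁) (Fin n₂) ℝ) :
    frob (V * A * Uᵀ) (W * B * Qᵀ) = frob A ((Vᵀ * W) * B * (Uᵀ * Q)ᵀ) := by
  rw [frob_eq_trace, frob_eq_trace]
  rw [Matrix.transpose_mul, Matrix.transpose_mul, Matrix.transpose_transpose,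
    Matrix.mul_assoc U, Matrix.trace_mul_comm U]
  simp only [Matrix.transpose_mul, Matrix.transpose_transpose, Matrix.mul_assoc]

lemma frob_sub_left (A B C : Matrix (Fin n₁) (Fin n₂) ℝ) :
    frob (A - B) C = frob A C - frob B C := by
  simp [frob, sub_mul, Finset.sum_sub_distrib]

lemma frob_comm (A B : Matrix (Fin n₁) (Fin n₂) ℝ) : frob A B = frob B A := by
  simp [frob, mul_comm]

lemma frob_self_nonneg (A : Matrix (Fin n₁) (Fin n₂) ℝ) : 0 ≤ frob A A :=
  Finset.sum_nonneg fun i _ => Finset.sum_nonneg fun j _ => mul_self_nonneg _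

end Frob

section Key
variable {n₁ n₂ : ℕ}

lemma mul_rectDiag_apply (P : Matrix (Fin n₁) (Fin n₁) ℝ) (σ : Fin (min n₁ n₂) → ℝ)
    (R : Matrix (Fin n₂) (Fin n₂) ℝ) (i : Fin n₁) (j : Fin n₂) :
    (P * rectDiag σ * Rᵀ) i j = ∑ l, σ l * (P i (emb1 l) * R j (emb2 l)) := by
  have h := sum_rectDiag_mul σ (Matrix.of fun a b => P i a * R j b)
  simp only [Matrix.of_apply] at h
  rw [← h]
  simp only [Matrix.mul_apply, Matrix.transpose_apply, Finset.sum_mul]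
  rw [Finset.sum_comm]
  refine Finset.sum_congr rfl fun a _ => Finset.sum_congr rfl fun b _ => by ring

/-- Columns of an orthogonal matrix restricted to `Fin (min n₁ n₂)` have norm ≤ 1. -/
lemma col_sq_sum_le {n : ℕ} (P : Matrix (Fin n) (Fin n) ℝ) (hP : Pᵀ * P = 1)
    (e : Fin (min n₁ n₂) → Fin n) (he : Function.Injective e) (c : Fin n) :
    ∑ k : Fin (min n₁ n₂), P (e k) c ^ 2 ≤ 1 := by
  have h1 : ∑ i : Fin n, P i c ^ 2 = 1 := by
    have := congrFun (congrFun hP c) c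
    simp only [Matrix.mul_apply, Matrix.transpose_apply, Matrix.one_apply_eq] at this
    rw [← this]
    exact Finset.sum_congr rfl fun i _ => (sq (P i c)).symm ▸ rfl
  rw [← h1]
  rw [show (∑ k : Fin (min n₁ n₂), P (e k) c ^ 2)
      = ∑ i ∈ Finset.univ.map ⟨e, he⟩, P i c ^ 2 from
      (Finset.sum_map Finset.univ ⟨e, he⟩ (fun i => P i c ^ 2)).symm]
  exact Finset.sum_le_sum_of_subset_of_nonneg (Finset.subset_univ _)
    (fun i _ _ => sq_nonneg _)

lemma emb1_inj : Function.Injective (@emb1 n₁ n₂) := fun a b h => by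
  simpa [emb1, Fin.ext_iff] using h

lemma emb2_inj : Function.Injective (@emb2 n₁ n₂) := fun a b h => by
  simpa [emb2, Fin.ext_iff] using h

/-- The key inequality: `⟨diag(c), P diag(σ) Rᵀ⟩ ≤ γ ∑ σ` when `0 ≤ c ≤ γ`. -/
lemma frob_le_nuclear (γ : ℝ) (hγ : 0 < γ) (c : Fin (min n₁ n₂) → ℝ)
    (hc0 : ∀ k, 0 ≤ c k) (hc1 : ∀ k, c k ≤ γ)
    (P : Matrix (Fin n₁) (Fin n₁) ℝ) (hP : Pᵀ * P = 1)
    (R : Matrix (Fin n₂) (Fin n₂) ℝ) (hR : Rᵀ * R = 1)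
    (σ : Fin (min n₁ n₂) → ℝ) (hσ : ∀ l, 0 ≤ σ l) :
    frob (rectDiag c) (P * rectDiag σ * Rᵀ) ≤ γ * ∑ l, σ l := by
  rw [frob, sum_rectDiag_mul]
  have h1 : ∀ k, c k * (P * rectDiag σ * Rᵀ) (emb1 k) (emb2 k)
      = ∑ l, σ l * (c k * (P (emb1 k) (emb1 l) * R (emb2 k) (emb2 l))) := by
    intro k
    rw [mul_rectDiag_apply, Finset.mul_sum]
    exact Finset.sum_congr rfl fun l _ => by ring
  rw [Finset.sum_congr rfl (fun k _ => h1 k), Finset.sum_comm]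
  have step : ∀ l : Fin (min n₁ n₂),
      ∑ k, σ l * (c k * (P (emb1 k) (emb1 l) * R (emb2 k) (emb2 l))) ≤ σ l * γ := by
    intro l
    rw [← Finset.mul_sum]
    refine mul_le_mul_of_nonneg_left ?_ (hσ l)
    have hstep1 : ∑ k, c k * (P (emb1 k) (emb1 l) * R (emb2 k) (emb2 l))
        ≤ ∑ k, γ * (|P (emb1 k) (emb1 l)| * |R (emb2 k) (emb2 l)|) := by
      refine Finset.sum_le_sum fun k _ => ?_
      calc c k * (P (emb1 k) (emb1 l) * R (emb2 k) (emb2 l))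
          ≤ c k * |P (emb1 k) (emb1 l) * R (emb2 k) (emb2 l)| :=
            mul_le_mul_of_nonneg_left (le_abs_self _) (hc0 k)
        _ ≤ γ * |P (emb1 k) (emb1 l) * R (emb2 k) (emb2 l)| :=
            mul_le_mul_of_nonneg_right (hc1 k) (abs_nonneg _)
        _ = γ * (|P (emb1 k) (emb1 l)| * |R (emb2 k) (emb2 l)|) := by rw [abs_mul]
    have hstep2 : ∑ k, |P (emb1 k) (emb1 l)| * |R (emb2 k) (emb2 l)| ≤ 1 := by
      have hcs := Finset.sum_mul_sq_le_sq_mul_sq Finset.univ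
        (fun k : Fin (min n₁ n₂) => |P (emb1 k) (emb1 l)|)
        (fun k => |R (emb2 k) (emb2 l)|)
      have hPc : ∑ k : Fin (min n₁ n₂), |P (emb1 k) (emb1 l)| ^ 2 ≤ 1 := by
        simpa [sq_abs] using col_sq_sum_le P hP emb1 emb1_inj (emb1 l)
      have hRc : ∑ k : Fin (min n₁ n₂), |R (emb2 k) (emb2 l)| ^ 2 ≤ 1 := by
        simpa [sq_abs] using col_sq_sum_le R hR emb2 emb2_inj (emb2 l)
      have hnn : (0:ℝ) ≤ ∑ k, |P (emb1 k) (emb1 l)| * |R (emb2 k) (emb2 l)| :=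
        Finset.sum_nonneg fun k _ => mul_nonneg (abs_nonneg _) (abs_nonneg _)
      have hPnn : (0:ℝ) ≤ ∑ k : Fin (min n₁ n₂), |P (emb1 k) (emb1 l)| ^ 2 :=
        Finset.sum_nonneg fun k _ => sq_nonneg _
      have hRnn : (0:ℝ) ≤ ∑ k : Fin (min n₁ n₂), |R (emb2 k) (emb2 l)| ^ 2 :=
        Finset.sum_nonneg fun k _ => sq_nonneg _
      nlinarith [hcs, hPc, hRc, hnn, hPnn, hRnn]
    calc ∑ k, c k * (P (emb1 k) (emb1 l) * R (emb2 k) (emb2 l))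
        ≤ ∑ k, γ * (|P (emb1 k) (emb1 l)| * |R (emb2 k) (emb2 l)|) := hstep1
      _ = γ * ∑ k, |P (emb1 k) (emb1 l)| * |R (emb2 k) (emb2 l)| := by rw [Finset.mul_sum]
      _ ≤ γ * 1 := mul_le_mul_of_nonneg_left hstep2 (le_of_lt hγ)
      _ = γ := mul_one γ
  calc ∑ l, ∑ k, σ l * (c k * (P (emb1 k) (emb1 l) * R (emb2 k) (emb2 l)))
      ≤ ∑ l, σ l * γ := Finset.sum_le_sum fun l _ => step l
    _ = γ * ∑ l, σ l := by rw [← Finset.sum_mul, mul_comm]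
end Key

section SVD
variable {n₁ n₂ : ℕ}

lemma rectDiag_eq_zero' (a : Fin (min n₁ n₂) → ℝ) (i : Fin n₁) (j : Fin n₂)
    (h : ¬ ((i : ℕ) = (j : ℕ) ∧ (i : ℕ) < min n₁ n₂)) : rectDiag a i j = 0 := by
  show dite _ _ _ = _
  rw [dif_neg h]

lemma mul_rectDiag_col (V : Matrix (Fin n₁) (Fin n₁) ℝ) (σ : Fin (min n₁ n₂) → ℝ)
    (i : Fin n₁) (j : Fin n₂) :
    (V * rectDiag σ) i j
      = if h : (j:ℕ) < min n₁ n₂ then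
          V i ⟨j, lt_of_lt_of_le h (min_le_left _ _)⟩ * σ ⟨j, h⟩ else 0 := by
  rw [Matrix.mul_apply]
  by_cases h : (j:ℕ) < min n₁ n₂
  · rw [dif_pos h, Finset.sum_eq_single (⟨(j:ℕ), lt_of_lt_of_le h (min_le_left _ _)⟩ : Fin n₁)]
    · congr 1
      show dite _ _ _ = _
      rw [dif_pos ⟨rfl, h⟩]
    · intro a _ ha
      rw [rectDiag_eq_zero', mul_zero]
      rintro ⟨h1, -⟩
      exact ha (Fin.ext h1)
    · intro hmem; exact absurd (Finset.mem_univ _) hmem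
  · rw [dif_neg h]
    refine Finset.sum_eq_zero fun a _ => ?_
    rw [rectDiag_eq_zero', mul_zero]
    rintro ⟨h1, h2⟩
    exact h (h1 ▸ h2)

lemma exists_isSVD (Z : Matrix (Fin n₁) (Fin n₂) ℝ) :
    ∃ (V : Matrix (Fin n₁) (Fin n₁) ℝ) (σ : Fin (min n₁ n₂) → ℝ)
      (U : Matrix (Fin n₂) (Fin n₂) ℝ), IsSVD Z V σ U := by
  classical
  have hA : (Zᵀ * Z).IsHermitian := by
    have := Matrix.isHermitian_conjTranspose_mul_self Z
    rwa [Matrix.conjTranspose_eq_transpose_of_trivial] at this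
  set μ : Fin n₂ → ℝ := hA.eigenvalues with hμdef
  have hμ0 : ∀ j, 0 ≤ μ j := by
    have hps : (Zᵀ * Z).PosSemidef := by
      have := Matrix.posSemidef_conjTranspose_mul_self Z
      rwa [Matrix.conjTranspose_eq_transpose_of_trivial] at this
    exact fun j => hps.eigenvalues_nonneg j
  set W : Matrix (Fin n₂) (Fin n₂) ℝ := (hA.eigenvectorUnitary : Matrix (Fin n₂) (Fin n₂) ℝ)
    with hWdef
  have hWmem : W ∈ Matrix.unitaryGroup (Fin n₂) ℝ := hA.eigenvectorUnitary.2
  have hstar : star W = Wᵀ := by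
    rw [Matrix.star_eq_conjTranspose, Matrix.conjTranspose_eq_transpose_of_trivial]
  have hW1 : Wᵀ * W = 1 := by rw [← hstar]; exact Matrix.mem_unitaryGroup_iff'.mp hWmem
  have hW2 : W * Wᵀ = 1 := by rw [← hstar]; exact Matrix.mem_unitaryGroup_iff.mp hWmem
  have hdiag : Wᵀ * (Zᵀ * Z) * W = Matrix.diagonal μ := by
    have h := hA.conjStarAlgAut_star_eigenvectorUnitary
    rw [Unitary.conjStarAlgAut_star_apply] at h
    rw [hstar] at h
    simpa using h
  set M := Z * W with hMdef
  have hM : Mᵀ * M = Matrix.diagonal μ := by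
    rw [hMdef, Matrix.transpose_mul, ← hdiag]
    simp only [Matrix.mul_assoc]
  have hcol : ∀ j₁ j₂ : Fin n₂, ∑ i, M i j₁ * M i j₂ = if j₁ = j₂ then μ j₁ else 0 := by
    intro j₁ j₂
    have h := congrFun (congrFun hM j₁) j₂
    simpa [Matrix.mul_apply, Matrix.transpose_apply, Matrix.diagonal_apply] using h
  have hinner : ∀ (x y : Fin n₁ → ℝ),
      (inner ℝ ((WithLp.equiv 2 (Fin n₁ → ℝ)).symm x) ((WithLp.equiv 2 (Fin n₁ → ℝ)).symm y) : ℝ)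
        = ∑ i, x i * y i := by
    intro x y
    simp [PiLp.inner_apply, RCLike.inner_apply, conj_trivial, WithLp.equiv_symm_apply, PiLp.toLp_apply, mul_comm]
  -- the cardinality bound
  set S : Finset (Fin n₂) := Finset.univ.filter (fun j => μ j ≠ 0) with hSdef
  have hmemS : ∀ j, j ∈ S ↔ μ j ≠ 0 := fun j => by simp [hSdef]
  have hcard1 : S.card ≤ n₁ := by
    set f : {j : Fin n₂ // μ j ≠ 0} → EuclideanSpace ℝ (Fin n₁) :=
      fun j => (Real.sqrt (μ j))⁻¹ • ((WithLp.equiv 2 (Fin n₁ → ℝ)).symm (fun i => M i j))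
      with hfdef
    have hf : Orthonormal ℝ f := by
      rw [orthonormal_iff_ite]
      intro j₁ j₂
      rw [hfdef]
      simp only [real_inner_smul_left, real_inner_smul_right]
      rw [hinner, hcol]
      by_cases h : j₁ = j₂
      · subst h
        rw [if_pos rfl, if_pos rfl]
        have hμpos : 0 < μ j₁ := lt_of_le_of_ne (hμ0 j₁) (Ne.symm j₁.2)
        have hs : Real.sqrt (μ j₁) ≠ 0 := by positivity
        rw [show (Real.sqrt (μ j₁))⁻¹ * ((Real.sqrt (μ j₁))⁻¹ * μ j₁)
            = μ j₁ / (Real.sqrt (μ j₁) * Real.sqrt (μ j₁)) by ring,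
          Real.mul_self_sqrt (hμ0 j₁), div_self (ne_of_gt hμpos)]
      · have hne : (j₁ : Fin n₂) ≠ (j₂ : Fin n₂) := fun hc => h (Subtype.ext hc)
        rw [if_neg hne, if_neg h]
        ring
    have hcard := hf.linearIndependent.fintype_card_le_finrank
    rw [finrank_euclideanSpace_fin] at hcard
    calc S.card = Fintype.card {j : Fin n₂ // μ j ≠ 0} := (Fintype.card_subtype _).symm
      _ ≤ n₁ := hcard
  have hScard : S.card ≤ min n₁ n₂ := by
    refine le_min hcard1 ?_
    calc S.card ≤ (Finset.univ : Finset (Fin n₂)).card := Finset.card_le_univ S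
      _ = n₂ := by simp
  -- the permutation
  set T : Finset (Fin n₂) := Finset.univ.filter (fun j => (j:ℕ) < min n₁ n₂) with hTdef
  have hmemT : ∀ j : Fin n₂, j ∈ T ↔ (j:ℕ) < min n₁ n₂ := fun j => by simp [hTdef]
  have hTcard : T.card = min n₁ n₂ := by
    have he : {j : Fin n₂ // (j:ℕ) < min n₁ n₂} ≃ Fin (min n₁ n₂) :=
      { toFun := fun j => ⟨j.1, j.2⟩
        invFun := fun k => ⟨⟨k, lt_of_lt_of_le k.2 (min_le_right _ _)⟩, k.2⟩
        left_inv := fun j => rfl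
        right_inv := fun k => rfl }
    calc T.card = Fintype.card {j : Fin n₂ // (j:ℕ) < min n₁ n₂} := (Fintype.card_subtype _).symm
      _ = Fintype.card (Fin (min n₁ n₂)) := Fintype.card_congr he
      _ = min n₁ n₂ := Fintype.card_fin _
  obtain ⟨u, huT, hucard⟩ := Finset.exists_subset_card_eq
    (show S.card ≤ T.card by rw [hTcard]; exact hScard)
  have e : {x // x ∈ S} ≃ {x // x ∈ u} := Finset.equivOfCardEq hucard.symm
  set fmap : Fin n₂ → Fin n₂ := fun j => if h : j ∈ S then (e ⟨j, h⟩ : Fin n₂) else j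
    with hfmapdef
  have hinj : Set.InjOn fmap S := by
    intro a ha b hb hab
    rw [Finset.mem_coe] at ha hb
    rw [hfmapdef] at hab
    simp only [dif_pos ha, dif_pos hb] at hab
    have h2 : e ⟨a, ha⟩ = e ⟨b, hb⟩ := Subtype.ext hab
    have h3 := e.injective h2
    exact congrArg Subtype.val h3
  have hcards : Fintype.card (Fin n₂) = (Finset.univ : Finset (Fin n₂)).card := by simp
  obtain ⟨g, hg⟩ := Finset.exists_equiv_extend_of_card_eq hcards
    (Finset.subset_univ (Finset.image fmap S)) hinj
  set π : Equiv.Perm (Fin n₂) := g.trans (Equiv.subtypeUnivEquiv (fun x => Finset.mem_univ x))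
    with hπdef
  have hπ : ∀ j ∈ S, ((π j : Fin n₂) : ℕ) < min n₁ n₂ := by
    intro j hj
    have h1 : π j = fmap j := by
      rw [hπdef]
      exact hg j hj
    rw [h1, hfmapdef]
    simp only [dif_pos hj]
    exact (hmemT _).mp (huT (e ⟨j, hj⟩).2)
  set ρ : Equiv.Perm (Fin n₂) := π.symm with hρdef
  have hρ : ∀ j : Fin n₂, min n₁ n₂ ≤ (j:ℕ) → μ (ρ j) = 0 := by
    intro j hj
    by_contra hne
    have hjS : ρ j ∈ S := (hmemS _).mpr hne
    have h2 := hπ (ρ j) hjS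
    rw [hρdef, Equiv.apply_symm_apply] at h2
    omega
  -- the matrices Q and N
  set Q : Matrix (Fin n₂) (Fin n₂) ℝ := W.submatrix id ρ with hQdef
  have hQ1 : Qᵀ * Q = 1 := by
    rw [hQdef, Matrix.transpose_submatrix]
    have h := Matrix.submatrix_mul_equiv Wᵀ W (ρ : Fin n₂ → Fin n₂) (Equiv.refl (Fin n₂)) ρ
    simp only [Equiv.coe_refl] at h
    rw [h, hW1, Matrix.submatrix_one_equiv]
  have hQ2 : Q * Qᵀ = 1 := mul_eq_one_comm.mp hQ1
  set N : Matrix (Fin n₁) (Fin n₂) ℝ := M.submatrix id ρ with hNdef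
  have hNQ : Z * Q = N := by
    rw [hQdef, hNdef, hMdef]
    ext i j
    simp [Matrix.mul_apply, Matrix.submatrix_apply]
  have hNcol : ∀ j₁ j₂, ∑ i, N i j₁ * N i j₂ = if j₁ = j₂ then μ (ρ j₁) else 0 := by
    intro j₁ j₂
    rw [hNdef]
    simp only [Matrix.submatrix_apply, id]
    rw [hcol (ρ j₁) (ρ j₂)]
    by_cases h : j₁ = j₂
    · rw [if_pos h, if_pos (congrArg ρ h)]
    · rw [if_neg h, if_neg (fun hc => h (ρ.injective hc))]
  have hNzero : ∀ j : Fin n₂, μ (ρ j) = 0 → ∀ i, N i j = 0 := by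
    intro j hz i
    have h0 : ∑ i, N i j * N i j = 0 := by rw [hNcol j j, if_pos rfl, hz]
    have h1 := (Finset.sum_eq_zero_iff_of_nonneg
      (fun i _ => mul_self_nonneg (N i j))).mp h0 i (Finset.mem_univ i)
    exact mul_self_eq_zero.mp h1
  -- singular values
  set σ : Fin (min n₁ n₂) → ℝ :=
    fun k => Real.sqrt (μ (ρ ⟨k, lt_of_lt_of_le k.2 (min_le_right _ _)⟩)) with hσdef
  -- the left orthogonal matrix
  set μ' : Fin n₁ → ℝ := fun j =>
    if h : (j:ℕ) < min n₁ n₂ then μ (ρ ⟨j, lt_of_lt_of_le h (min_le_right _ _)⟩) else 0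
    with hμ'def
  set N' : Fin n₁ → Fin n₁ → ℝ := fun j i =>
    if h : (j:ℕ) < min n₁ n₂ then N i ⟨j, lt_of_lt_of_le h (min_le_right _ _)⟩ else 0
    with hN'def
  set v : Fin n₁ → EuclideanSpace ℝ (Fin n₁) := fun j =>
    (Real.sqrt (μ' j))⁻¹ • ((WithLp.equiv 2 (Fin n₁ → ℝ)).symm (N' j)) with hvdef
  set s : Set (Fin n₁) := {j | (j:ℕ) < min n₁ n₂ ∧ μ' j ≠ 0} with hsdef
  have hμ'eq : ∀ (j : Fin n₁) (h : (j:ℕ) < min n₁ n₂),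
      μ' j = μ (ρ ⟨j, lt_of_lt_of_le h (min_le_right _ _)⟩) := by
    intro j h
    rw [hμ'def]
    exact dif_pos h
  have hN'eq : ∀ (j : Fin n₁) (h : (j:ℕ) < min n₁ n₂),
      N' j = fun i => N i ⟨j, lt_of_lt_of_le h (min_le_right _ _)⟩ := by
    intro j h
    rw [hN'def]
    funext i
    exact dif_pos h
  have horthov : Orthonormal ℝ (s.restrict v) := by
    rw [orthonormal_iff_ite]
    rintro ⟨j₁, hj₁⟩ ⟨j₂, hj₂⟩
    obtain ⟨hlt₁, hne₁⟩ := hj₁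
    obtain ⟨hlt₂, hne₂⟩ := hj₂
    simp only [Set.restrict_apply, Subtype.mk.injEq]
    rw [hvdef]
    simp only [Set.restrict, Set.domRestrict, real_inner_smul_left, real_inner_smul_right]
    rw [hinner, hN'eq j₁ hlt₁, hN'eq j₂ hlt₂, hNcol,
      hμ'eq j₁ hlt₁, hμ'eq j₂ hlt₂]
    rw [hμ'eq j₁ hlt₁] at hne₁
    rw [hμ'eq j₂ hlt₂] at hne₂
    by_cases h : j₁ = j₂
    · subst h
      rw [if_pos rfl, if_pos rfl]
      have hμpos : 0 < μ (ρ ⟨j₁, lt_of_lt_of_le hlt₁ (min_le_right _ _)⟩) :=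
        lt_of_le_of_ne (hμ0 _) (Ne.symm hne₁)
      have hs0 : Real.sqrt (μ (ρ ⟨j₁, lt_of_lt_of_le hlt₁ (min_le_right _ _)⟩)) ≠ 0 := by
        positivity
      rw [show ∀ x : ℝ, (Real.sqrt x)⁻¹ * ((Real.sqrt x)⁻¹ * x)
          = x / (Real.sqrt x * Real.sqrt x) from fun x => by ring]
      rw [Real.mul_self_sqrt (hμ0 _), div_self (ne_of_gt hμpos)]
    · have hne' : (⟨(j₁:ℕ), lt_of_lt_of_le hlt₁ (min_le_right _ _)⟩ : Fin n₂)
          ≠ ⟨(j₂:ℕ), lt_of_lt_of_le hlt₂ (min_le_right _ _)⟩ := by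
        intro hc
        rw [Fin.mk.injEq] at hc
        exact h (Fin.ext hc)
      rw [if_neg hne', if_neg h]
      ring
  have hcardE : Module.finrank ℝ (EuclideanSpace ℝ (Fin n₁)) = Fintype.card (Fin n₁) := by
    rw [finrank_euclideanSpace_fin, Fintype.card_fin]
  obtain ⟨b, hb⟩ := horthov.exists_orthonormalBasis_extension_of_card_eq hcardE
  set V : Matrix (Fin n₁) (Fin n₁) ℝ := Matrix.of (fun i j => b j i) with hVdef
  have hV1 : Vᵀ * V = 1 := by
    have hbo := b.orthonormal
    rw [orthonormal_iff_ite] at hbo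
    ext j₁ j₂
    have hip := hbo j₁ j₂
    rw [PiLp.inner_apply] at hip
    simp only [RCLike.inner_apply, conj_trivial] at hip
    rw [Matrix.mul_apply, Matrix.one_apply]
    simpa [hVdef, Matrix.transpose_apply, mul_comm] using hip
  have hV2 : V * Vᵀ = 1 := mul_eq_one_comm.mp hV1
  -- the key equation
  have key : Z * Q = V * rectDiag σ := by
    ext i j
    rw [hNQ, mul_rectDiag_col]
    by_cases h : (j:ℕ) < min n₁ n₂
    · rw [dif_pos h]
      have hjeta : (⟨((⟨(j:ℕ), h⟩ : Fin (min n₁ n₂)) : ℕ),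
          lt_of_lt_of_le h (min_le_right _ _)⟩ : Fin n₂) = j := Fin.eta j _
      have hσeq : σ ⟨j, h⟩ = Real.sqrt (μ (ρ j)) := by
        rw [hσdef]
      by_cases hz : μ (ρ j) = 0
      · rw [hNzero j hz i, hσeq, hz, Real.sqrt_zero, mul_zero]
      · set j' : Fin n₁ := ⟨j, lt_of_lt_of_le h (min_le_left _ _)⟩ with hj'def
        have hj's : j' ∈ s := by
          rw [hsdef]
          refine ⟨h, ?_⟩
          rw [hμ'eq j' h]
          exact hz
        have hVij : V i j' = (Real.sqrt (μ (ρ j)))⁻¹ * N i j := by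
          rw [hVdef]
          show b j' i = _
          rw [hb j' hj's, hvdef]
          simp only [PiLp.smul_apply, WithLp.equiv_symm_apply, PiLp.toLp_apply, smul_eq_mul]
          rw [hN'eq j' h, hμ'eq j' h]
        rw [hVij, hσeq]
        have hs0 : Real.sqrt (μ (ρ j)) ≠ 0 := by
          have hμpos : 0 < μ (ρ j) := lt_of_le_of_ne (hμ0 _) (Ne.symm hz)
          positivity
        field_simp
    · rw [dif_neg h]
      exact hNzero j (hρ j (le_of_not_gt h)) i
  have hfinal : Z = V * rectDiag σ * Qᵀ := by
    have h1 : Z = Z * Q * Qᵀ := by rw [Matrix.mul_assoc, hQ2, Matrix.mul_one]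
    rw [h1, key]
  exact ⟨V, σ, Q, hV1, hV2, hQ1, hQ2, fun k => Real.sqrt_nonneg _, hfinal⟩
end SVD

section Final
variable {n₁ n₂ : ℕ}

lemma frob_sub_right (A B C : Matrix (Fin n₁) (Fin n₂) ℝ) :
    frob A (B - C) = frob A B - frob A C := by
  simp [frob, mul_sub, Finset.sum_sub_distrib]

lemma frob_expand (A B : Matrix (Fin n₁) (Fin n₂) ℝ) :
    frob (A + B) (A + B) = frob A A + 2 * frob A B + frob B B := by
  simp only [frob, Matrix.add_apply]
  have h : ∀ i j, (A i j + B i j) * (A i j + B i j)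
      = A i j * A i j + 2 * (A i j * B i j) + B i j * B i j := fun i j => by ring
  simp_rw [h, Finset.sum_add_distrib, Finset.mul_sum]

lemma frob_self_eq_zero {A : Matrix (Fin n₁) (Fin n₂) ℝ} (h : frob A A = 0) : A = 0 := by
  ext i j
  have h1 := (Finset.sum_eq_zero_iff_of_nonneg
    (fun i _ => Finset.sum_nonneg fun j _ => mul_self_nonneg (A i j))).mp h i (Finset.mem_univ i)
  have h2 := (Finset.sum_eq_zero_iff_of_nonneg
    (fun j _ => mul_self_nonneg (A i j))).mp h1 j (Finset.mem_univ j)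
  simpa using mul_self_eq_zero.mp h2

lemma sq_sum_eq_frob (A B : Matrix (Fin n₁) (Fin n₂) ℝ) :
    ∑ i, ∑ j, (A i j - B i j) ^ 2 = frob (A - B) (A - B) := by
  simp [frob, Matrix.sub_apply, sq]

lemma softThresh_props {γ l : ℝ} (hγ : 0 < γ) (hl : 0 ≤ l) :
    0 ≤ max 0 (1 - γ / |l|) * l ∧ 0 ≤ l - max 0 (1 - γ / |l|) * l ∧
      l - max 0 (1 - γ / |l|) * l ≤ γ ∧
      (l - max 0 (1 - γ / |l|) * l) * (max 0 (1 - γ / |l|) * l)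
        = γ * (max 0 (1 - γ / |l|) * l) := by
  rcases eq_or_lt_of_le hl with h0 | hpos
  · rw [← h0]
    simp [hγ.le]
  · rw [abs_of_pos hpos]
    by_cases hle : l ≤ γ
    · have h1 : 1 ≤ γ / l := (one_le_div hpos).mpr hle
      have h2 : 1 - γ / l ≤ 0 := by linarith
      rw [max_eq_left h2, zero_mul]
      exact ⟨le_rfl, by simpa using hl, by simpa using hle, by ring⟩
    · push_neg at hle
      have h1 : γ / l < 1 := (div_lt_one hpos).mpr hle
      have h2 : (0:ℝ) ≤ 1 - γ / l := by linarith
      have hT : (1 - γ / l) * l = l - γ := by field_simp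
      rw [max_eq_right h2, hT]
      refine ⟨by linarith, by linarith, by linarith, by ring⟩

end Final

/-- For every `γ > 0` and every `X` with SVD `X = V diag(Λ) Uᵀ`, the proximity operator
of `γ‖·‖_*` (nuclear norm = sum of singular values) is `V diag(T_γ(Λ)) Uᵀ`: this matrix
is the unique minimizer of `Z ↦ (1/2)‖X − Z‖_F² + γ‖Z‖_*`. -/
theorem prox_nuclear_norm {n₁ n₂ : ℕ}
    (nuclearNorm : Matrix (Fin n₁) (Fin n₂) ℝ → ℝ)
    (hN : ∀ Z V Λ U, IsSVD Z V Λ U → nuclearNorm Z = ∑ i, Λ i)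
    (γ : ℝ) (hγ : 0 < γ)
    (X : Matrix (Fin n₁) (Fin n₂) ℝ)
    (V : Matrix (Fin n₁) (Fin n₁) ℝ) (Λ : Fin (min n₁ n₂) → ℝ)
    (U : Matrix (Fin n₂) (Fin n₂) ℝ) (hSVD : IsSVD X V Λ U) :
    (∀ Z : Matrix (Fin n₁) (Fin n₂) ℝ,
        (1 / 2 : ℝ) * (∑ i, ∑ j, (X i j - (V * rectDiag (softThresh γ Λ) * Uᵀ) i j) ^ 2)
            + γ * nuclearNorm (V * rectDiag (softThresh γ Λ) * Uᵀ)
          ≤ (1 / 2 : ℝ) * (∑ i, ∑ j, (X i j - Z i j) ^ 2) + γ * nuclearNorm Z) ∧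
      (∀ Z : Matrix (Fin n₁) (Fin n₂) ℝ,
        (∀ W : Matrix (Fin n₁) (Fin n₂) ℝ,
          (1 / 2 : ℝ) * (∑ i, ∑ j, (X i j - Z i j) ^ 2) + γ * nuclearNorm Z
            ≤ (1 / 2 : ℝ) * (∑ i, ∑ j, (X i j - W i j) ^ 2) + γ * nuclearNorm W) →
        Z = V * rectDiag (softThresh γ Λ) * Uᵀ) := by
  obtain ⟨hV1, hV2, hU1, hU2, hΛ0, hX⟩ := hSVD
  set T : Fin (min n₁ n₂) → ℝ := softThresh γ Λ with hTdef
  set P : Matrix (Fin n₁) (Fin n₂) ℝ := V * rectDiag T * Uᵀ with hPdef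
  set c : Fin (min n₁ n₂) → ℝ := fun k => Λ k - T k with hcdef
  have props : ∀ k, 0 ≤ T k ∧ 0 ≤ c k ∧ c k ≤ γ ∧ c k * T k = γ * T k := by
    intro k
    have h := softThresh_props (l := Λ k) hγ (hΛ0 k)
    exact ⟨h.1, h.2.1, h.2.2.1, h.2.2.2⟩
  have hT0 : ∀ k, 0 ≤ T k := fun k => (props k).1
  have hc0 : ∀ k, 0 ≤ c k := fun k => (props k).2.1
  have hc1 : ∀ k, c k ≤ γ := fun k => (props k).2.2.1
  have hcT : ∀ k, c k * T k = γ * T k := fun k => (props k).2.2.2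
  have hNP : nuclearNorm P = ∑ k, T k :=
    hN P V T U ⟨hV1, hV2, hU1, hU2, hT0, rfl⟩
  have hD : X - P = V * rectDiag c * Uᵀ := by
    have hrd : rectDiag Λ - rectDiag T = rectDiag c := by
      ext i j
      rw [Matrix.sub_apply]
      by_cases h : (i : ℕ) = (j : ℕ) ∧ (i : ℕ) < min n₁ n₂
      · show dite _ _ _ - dite _ _ _ = dite _ _ _
        rw [dif_pos h, dif_pos h, dif_pos h]
      · rw [rectDiag_eq_zero _ _ _ h, rectDiag_eq_zero _ _ _ h, rectDiag_eq_zero _ _ _ h,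
          sub_zero]
    rw [hX, hPdef, ← Matrix.sub_mul, ← Matrix.mul_sub, hrd]
  have hmain : ∀ Z : Matrix (Fin n₁) (Fin n₂) ℝ,
      (1 / 2 : ℝ) * frob (X - P) (X - P) + γ * nuclearNorm P
          + (1 / 2 : ℝ) * frob (P - Z) (P - Z)
        ≤ (1 / 2 : ℝ) * frob (X - Z) (X - Z) + γ * nuclearNorm Z := by
    intro Z
    obtain ⟨Wz, σz, Qz, hw1, hw2, hq1, hq2, hσ0, hZeq⟩ := exists_isSVD Z
    have hNZ : nuclearNorm Z = ∑ l, σz l := hN Z Wz σz Qz ⟨hw1, hw2, hq1, hq2, hσ0, hZeq⟩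
    have hexp : frob (X - Z) (X - Z)
        = frob (X - P) (X - P) + 2 * frob (X - P) (P - Z) + frob (P - Z) (P - Z) := by
      rw [show X - Z = (X - P) + (P - Z) from (sub_add_sub_cancel X P Z).symm, frob_expand]
    have hDP : frob (X - P) P = γ * ∑ k, T k := by
      rw [hD, hPdef, frob_conj V U V U (rectDiag c) (rectDiag T), hV1, hU1,
        Matrix.transpose_one, Matrix.one_mul, Matrix.mul_one, frob, sum_rectDiag_mul,
        Finset.mul_sum]
      refine Finset.sum_congr rfl fun k _ => ?_
      rw [rectDiag_emb]
      exact hcT k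
    have hDZ : frob (X - P) Z ≤ γ * ∑ l, σz l := by
      rw [hD, hZeq, frob_conj]
      refine frob_le_nuclear γ hγ c hc0 hc1 (Vᵀ * Wz) ?_ (Uᵀ * Qz) ?_ σz hσ0
      · rw [Matrix.transpose_mul, Matrix.transpose_transpose, Matrix.mul_assoc,
          ← Matrix.mul_assoc V Vᵀ Wz, hV2, Matrix.one_mul, hw1]
      · rw [Matrix.transpose_mul, Matrix.transpose_transpose, Matrix.mul_assoc,
          ← Matrix.mul_assoc U Uᵀ Qz, hU2, Matrix.one_mul, hq1]
    have hfs : frob (X - P) (P - Z) = frob (X - P) P - frob (X - P) Z :=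
      frob_sub_right _ _ _
    have hNP' : γ * nuclearNorm P = γ * ∑ k, T k := by rw [hNP]
    have hNZ' : γ * nuclearNorm Z = γ * ∑ l, σz l := by rw [hNZ]
    linarith [hexp, hDP, hDZ, hfs, hNP', hNZ']
  constructor
  · intro Z
    have h := hmain Z
    have hnn := frob_self_nonneg (P - Z)
    rw [sq_sum_eq_frob X P, sq_sum_eq_frob X Z]
    linarith
  · intro Z hZmin
    have h1 := hZmin P
    rw [sq_sum_eq_frob X Z, sq_sum_eq_frob X P] at h1
    have h2 := hmain Z
    have hzero : frob (P - Z) (P - Z) = 0 :=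
      le_antisymm (by linarith) (frob_self_nonneg _)
    have h3 : P - Z = 0 := frob_self_eq_zero hzero
    have h4 : P = Z := by
      have := sub_eq_zero.mp h3
      exact this
    exact h4.symm
end

section
/- Let Λ ∈ ℝ^n be a vector of pairwise distinct nonnegative entries. For each pair (i,j) with i ≠ j, the 2×2 linear system with matrix [[Λ_j, −Λ_i], [−Λ_i, Λ_j]] is invertible (its determinant Λ_j² − Λ_i² is nonzero), and the unique solution of [[Λ_j, −Λ_i], [−Λ_i, Λ_j]] (a, b)^T = (−c, −d)^T is a = −(Λ_j c + Λ_i d)/(Λ_j² − Λ_i²), b = −(Λ_i c + Λ_j d)/(Λ_j² − Λ_i²). Consequently, given z̄ ∈ ℝ^{n×n}, there exist unique antisymmetric matrices ι_V, ι_U ∈ ℝ^{n×n} and a unique vector ζ_Λ ∈ ℝ^n such that ι_V diag(Λ) + diag(Λ) ι_U^* + diag(ζ_Λ) = −z̄. -/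
open Matrix

/-- Let `Λ ∈ ℝ^n` have pairwise distinct nonnegative entries. For each pair `(i,j)` with
`i ≠ j`, the 2×2 system with matrix `[[Λ_j, −Λ_i], [−Λ_i, Λ_j]]` is invertible
(determinant `Λ_j² − Λ_i² ≠ 0`) and has the stated explicit unique solution.
Consequently, given `z̄ ∈ ℝ^{n×n}`, there exist unique antisymmetric matrices
`ι_V, ι_U` and a unique vector `ζ_Λ` such that
`ι_V diag(Λ) + diag(Λ) ι_Uᵀ + diag(ζ_Λ) = −z̄`. -/
theorem two_by_two_systems_unique_solution {n : ℕ}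
    (Λ : Fin n → ℝ) (hpos : ∀ i, 0 ≤ Λ i)
    (hdist : ∀ i j : Fin n, i ≠ j → Λ i ≠ Λ j) :
    (∀ i j : Fin n, i ≠ j → Λ j ^ 2 - Λ i ^ 2 ≠ 0) ∧
      (∀ i j : Fin n, i ≠ j → ∀ c d a b : ℝ,
        (Λ j * a - Λ i * b = -c ∧ -(Λ i) * a + Λ j * b = -d) ↔
          (a = -(Λ j * c + Λ i * d) / (Λ j ^ 2 - Λ i ^ 2) ∧
            b = -(Λ i * c + Λ j * d) / (Λ j ^ 2 - Λ i ^ 2))) ∧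
      ∀ zb : Matrix (Fin n) (Fin n) ℝ,
        ∃! p : Matrix (Fin n) (Fin n) ℝ × Matrix (Fin n) (Fin n) ℝ × (Fin n → ℝ),
          p.1ᵀ = -p.1 ∧ p.2.1ᵀ = -p.2.1 ∧
            p.1 * Matrix.diagonal Λ + Matrix.diagonal Λ * p.2.1ᵀ
              + Matrix.diagonal p.2.2 = -zb := by
  have hdet : ∀ i j : Fin n, i ≠ j → Λ j ^ 2 - Λ i ^ 2 ≠ 0 := by
    intro i j hij
    exact sub_ne_zero.mpr fun he =>
      hdist j i (Ne.symm hij) ((sq_eq_sq₀ (hpos j) (hpos i)).mp he)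
  have hiff : ∀ i j : Fin n, i ≠ j → ∀ c d a b : ℝ,
      (Λ j * a - Λ i * b = -c ∧ -(Λ i) * a + Λ j * b = -d) ↔
        (a = -(Λ j * c + Λ i * d) / (Λ j ^ 2 - Λ i ^ 2) ∧
          b = -(Λ i * c + Λ j * d) / (Λ j ^ 2 - Λ i ^ 2)) := by
    intro i j hij c d a b
    have hD := hdet i j hij
    constructor
    · rintro ⟨h1, h2⟩
      constructor
      · rw [eq_div_iff hD]; linear_combination Λ j * h1 + Λ i * h2
      · rw [eq_div_iff hD]; linear_combination Λ i * h1 + Λ j * h2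
    · rintro ⟨ha, hb⟩
      subst ha hb
      constructor <;> field_simp <;> ring
  refine ⟨hdet, hiff, ?_⟩
  intro zb
  classical
  set V : Matrix (Fin n) (Fin n) ℝ := fun i j =>
    if i = j then 0 else -(Λ j * zb i j + Λ i * zb j i) / (Λ j ^ 2 - Λ i ^ 2) with hVdef
  set U : Matrix (Fin n) (Fin n) ℝ := fun i j =>
    if i = j then 0 else -(Λ i * zb i j + Λ j * zb j i) / (Λ j ^ 2 - Λ i ^ 2) with hUdef
  refine ⟨(V, U, fun i => -zb i i), ⟨?_, ?_, ?_⟩, ?_⟩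
  · ext i j
    simp only [transpose_apply, Matrix.neg_apply]; simp only [hVdef]
    by_cases h : i = j
    · subst h; simp
    · rw [if_neg (Ne.symm h), if_neg h]
      have hD := hdet i j h
      have hD' := hdet j i (Ne.symm h)
      field_simp
      ring
  · ext i j
    simp only [transpose_apply, Matrix.neg_apply]; simp only [hUdef]
    by_cases h : i = j
    · subst h; simp
    · rw [if_neg (Ne.symm h), if_neg h]
      have hD := hdet i j h
      have hD' := hdet j i (Ne.symm h)
      field_simp
      ring
  · ext i j
    simp only [Matrix.add_apply, mul_diagonal, diagonal_mul, transpose_apply, Matrix.neg_apply]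
    by_cases h : i = j
    · subst h
      simp [hVdef, hUdef, diagonal_apply_eq]
    · rw [diagonal_apply_ne _ h]
      simp only [hVdef, hUdef, if_neg h, if_neg (Ne.symm h)]
      have hD := hdet i j h
      have hD' := hdet j i (Ne.symm h)
      field_simp
      ring
  · rintro ⟨W, X, ζ⟩ ⟨hW, hX, heq⟩
    have hWa : ∀ i j, W j i = -W i j := fun i j => by
      have := congrFun (congrFun hW i) j; simpa using this
    have hXa : ∀ i j, X j i = -X i j := fun i j => by
      have := congrFun (congrFun hX i) j; simpa using this
    have hent : ∀ i j, W i j * Λ j + Λ i * X j i + diagonal ζ i j = -zb i j := by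
      intro i j
      have := congrFun (congrFun heq i) j
      simpa [Matrix.add_apply, mul_diagonal, diagonal_mul, transpose_apply, Matrix.neg_apply] using this
    have hζ : ζ = fun i => -zb i i := by
      funext i
      have h0 : W i i = 0 := by have := hWa i i; linarith
      have h1 : X i i = 0 := by have := hXa i i; linarith
      have := hent i i
      rw [h0, h1, diagonal_apply_eq] at this
      linarith
    have key : ∀ i j : Fin n, i ≠ j →
        W i j = -(Λ j * zb i j + Λ i * zb j i) / (Λ j ^ 2 - Λ i ^ 2) ∧
        X i j = -(Λ i * zb i j + Λ j * zb j i) / (Λ j ^ 2 - Λ i ^ 2) := by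
      intro i j h
      have e1 : Λ j * W i j - Λ i * X i j = -(zb i j) := by
        have h' := hent i j
        rw [diagonal_apply_ne _ h, hXa i j] at h'
        linear_combination h'
      have e2 : -(Λ i) * W i j + Λ j * X i j = -(zb j i) := by
        have h' := hent j i
        rw [diagonal_apply_ne _ (Ne.symm h), hWa i j] at h'
        linear_combination h'
      exact (hiff i j h (zb i j) (zb j i) (W i j) (X i j)).mp ⟨e1, e2⟩
    have hWV : W = V := by
      ext i j
      by_cases h : i = j
      · subst h
        have h0 : W i i = 0 := by have := hWa i i; linarith
        simp [hVdef, h0]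
      · simp only [hVdef, if_neg h]
        exact (key i j h).1
    have hXU : X = U := by
      ext i j
      by_cases h : i = j
      · subst h
        have h0 : X i i = 0 := by have := hXa i i; linarith
        simp [hUdef, h0]
      · simp only [hUdef, if_neg h]
        exact (key i j h).2
    exact Prod.ext hWV (Prod.ext hXU hζ)
end
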